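/- arXiv:2411.11065 — 8 statements merged into one kernel-verified Lean document; each statement's English description precedes it below -/
import Mathlib

section
/- Let a ∈ ℕ, b ∈ ℤ, c ∈ ℝ with c > 0, and d ∈ ℝ. Set D := a·φ(gcd(a,b))/(c·gcd(a,b)). Then the set of values φ(an+b)/(cn+d), as n ranges over positive integers with n > max{-b/a, -d/c} and φ(an+b)/(cn+d) ≤ D, is dense in the real interval (0, D]. -/
set_option maxHeartbeats 1600000

open Nat in
lemma nth_prime_tail_not_summable (i₀ : ℕ) :
    ¬ Summable (fun k : ℕ => (1 : ℝ) / (Nat.nth Nat.Prime (k + i₀))) := by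
  intro h
  have h0 : Summable (fun k : ℕ => (1 : ℝ) / (Nat.nth Nat.Prime k)) :=
    (summable_nat_add_iff i₀).mp h
  have hinj : Function.Injective (fun p : Nat.Primes => Nat.count Nat.Prime (p : ℕ)) := by
    intro p q hpq
    have := Nat.nth_count p.2
    have h2 := Nat.nth_count q.2
    apply Subtype.ext
    simp only [] at hpq
    rw [← this, ← h2, hpq]
  have := h0.comp_injective hinj
  exact Nat.Primes.not_summable_one_div (by
    convert this using 2 with p
    · rfl
    · simp [Function.comp, Nat.nth_count p.2])

lemma exists_prime_prod_approx (t : ℝ) (ht : 0 < t) (ht1 : t ≤ 1) (N : ℕ) {ε : ℝ} (hε : 0 < ε) :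
    ∃ P : Finset ℕ, (∀ p ∈ P, p.Prime ∧ N < p) ∧
      t ≤ ∏ p ∈ P, (1 - 1/(p:ℝ)) ∧ ∏ p ∈ P, (1 - 1/(p:ℝ)) < t + ε := by
  set M : ℕ := max N ⌈(t+ε)/ε⌉₊ with hM
  set f : ℕ → ℕ := fun k => Nat.nth Nat.Prime (k + (M+1)) with hf
  have hfmono : StrictMono f := fun i j hij =>
    (Nat.nth_strictMono Nat.infinite_setOf_prime) (by omega)
  have hfprime : ∀ k, (f k).Prime := fun k => Nat.prime_nth_prime _
  have hfge : ∀ k, M < f k := fun k => by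
    have h1 : k + (M+1) ≤ Nat.nth Nat.Prime (k + (M+1)) :=
      (Nat.nth_strictMono Nat.infinite_setOf_prime).le_apply
    show M < Nat.nth Nat.Prime (k + (M+1))
    omega
  have hfpos : ∀ k, (0:ℝ) < 1 - 1/(f k) := fun k => by
    have h2 := (hfprime k).two_le
    have : (2:ℝ) ≤ f k := by exact_mod_cast h2
    have : 1/(f k : ℝ) ≤ 1/2 := by
      apply one_div_le_one_div_of_le <;> linarith
    linarith
  set Pi : ℕ → ℝ := fun k => ∏ i ∈ Finset.range k, (1 - 1/(f i : ℝ)) with hPi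
  have hPipos : ∀ k, 0 < Pi k := fun k => Finset.prod_pos (fun i _ => hfpos i)
  have hPile : ∀ k, Pi k ≤ 1 := fun k => by
    apply Finset.prod_le_one (fun i _ => (hfpos i).le) (fun i _ => by
      have : (0:ℝ) < f i := by have := (hfprime i).pos; exact_mod_cast this
      have : (0:ℝ) ≤ 1/(f i : ℝ) := by positivity
      linarith)
  have hex : ∃ k, Pi k < t := by
    by_contra hcon
    push_neg at hcon
    have hsum : ∀ k, ∑ i ∈ Finset.range k, (1:ℝ)/(f i) ≤ -Real.log t := by
      intro k
      have hexp : Pi k ≤ Real.exp (-(∑ i ∈ Finset.range k, (1:ℝ)/(f i))) := by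
        rw [← Finset.sum_neg_distrib, Real.exp_sum]
        apply Finset.prod_le_prod (fun i _ => (hfpos i).le)
        intro i _
        have := Real.add_one_le_exp (-(1/(f i : ℝ)))
        linarith
      have hlog : Real.log t ≤ -(∑ i ∈ Finset.range k, (1:ℝ)/(f i)) := by
        calc Real.log t ≤ Real.log (Real.exp (-(∑ i ∈ Finset.range k, (1:ℝ)/(f i)))) :=
              Real.log_le_log ht (le_trans (hcon k) hexp)
          _ = _ := Real.log_exp _
      linarith
    have : Summable (fun k : ℕ => (1:ℝ)/(f k)) := by
      apply summable_of_sum_range_le (fun k => by positivity) hsum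
    exact nth_prime_tail_not_summable (M+1) this
  set K := Nat.find hex with hK
  have hKlt : Pi K < t := Nat.find_spec hex
  have hKne : K ≠ 0 := by
    intro h0
    rw [h0] at hKlt
    simp [hPi] at hKlt
    linarith
  obtain ⟨k, hk⟩ : ∃ k, K = k + 1 := ⟨K - 1, by omega⟩
  have hklow : t ≤ Pi k := by
    have h2 : ¬ Pi k < t := Nat.find_min hex (by omega)
    linarith [not_lt.mp h2]
  have hsucc : Pi (k+1) = Pi k * (1 - 1/(f k : ℝ)) := Finset.prod_range_succ _ _
  have hup : Pi k < t + ε := by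
    have h1 : Pi k * (1 - 1/(f k : ℝ)) < t := by rw [← hsucc, ← hk]; exact hKlt
    have hfk : (t + ε)/ε ≤ (f k : ℝ) := by
      have : ((⌈(t+ε)/ε⌉₊ : ℝ)) ≤ f k := by
        have : (M : ℝ) < f k := by exact_mod_cast hfge k
        have hle : (⌈(t+ε)/ε⌉₊ : ℝ) ≤ (M:ℝ) := by exact_mod_cast Nat.cast_le.mpr (le_max_right N _)
        linarith
      calc (t+ε)/ε ≤ (⌈(t+ε)/ε⌉₊ : ℝ) := Nat.le_ceil _
        _ ≤ f k := this
    have hfk0 : (0:ℝ) < f k := by have := (hfprime k).pos; exact_mod_cast this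
    have hpos := hfpos k
    have key : t ≤ (t + ε) * (1 - 1/(f k : ℝ)) := by
      have : (t + ε) ≤ ε * f k := by
        rw [div_le_iff₀ hε] at hfk
        linarith [mul_comm ε (f k : ℝ)]
      have h2 : (t+ε) * (1/(f k:ℝ)) ≤ ε := by
        rw [mul_one_div, div_le_iff₀ hfk0]
        linarith [mul_comm ε (f k : ℝ)]
      nlinarith
    nlinarith [hPipos k]
  refine ⟨(Finset.range k).image f, ?_, ?_, ?_⟩
  · intro p hp
    obtain ⟨i, _, rfl⟩ := Finset.mem_image.mp hp
    exact ⟨hfprime i, lt_of_le_of_lt (le_max_left _ _) (hfge i)⟩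
  · rw [Finset.prod_image (fun i _ j _ h => hfmono.injective h)]
    exact hklow
  · rw [Finset.prod_image (fun i _ j _ h => hfmono.injective h)]
    exact hup


lemma aux_mul_le_one (x y : ℝ) (hx0 : 0 ≤ x) (hx1 : x ≤ 1) (hy0 : 0 ≤ y) (hy1 : y ≤ 1) :
    x * y ≤ 1 := by nlinarith

lemma aux_prod_lower (u v Pr : ℝ) (hu : 0 ≤ u) (hv : 0 ≤ v)
    (hPr0 : 0 ≤ Pr) (hPr1 : Pr ≤ 1) (huv : 0 ≤ u * v) :
    Pr - u - v ≤ (1 - v) * ((1 - u) * Pr) := by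
  have h1 : u * Pr ≤ u := by nlinarith
  have h2 : v * Pr ≤ v := by nlinarith
  have h3 : 0 ≤ u * v * Pr := by positivity
  nlinarith

lemma aux_two_div (B ε q : ℝ) (hB : 0 < B) (hε : 0 < ε) (hq : 2 * B / ε ≤ q) :
    2 / q ≤ ε / B := by
  have hq0 : 0 < q := lt_of_lt_of_le (by positivity) hq
  rw [div_le_div_iff₀ hq0 hB]
  rw [div_le_iff₀ hε] at hq
  nlinarith

lemma aux_dist (Dr t e1 A Pq ε : ℝ) (hDr : 0 < Dr) (hε : 0 < ε)
    (ht1 : t ≤ 1) (he1a : e1 ≤ 1) (he1b : e1 ≤ ε / (8 * (Dr + 1)))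
    (hA0 : 0 ≤ A) (hA1 : |A - 1| ≤ e1) (hPq0 : 0 ≤ Pq)
    (hPl : t - e1 ≤ Pq) (hPu : Pq ≤ t + e1) :
    |Dr * t - Dr * (Pq * A)| < ε := by
  obtain ⟨h1, h2⟩ := abs_le.mp hA1
  have he10 : 0 ≤ e1 := le_trans (abs_nonneg _) hA1
  have hte : 0 ≤ t + e1 := le_trans hPq0 hPu
  have key : |t - Pq * A| ≤ 3 * e1 := by
    rw [abs_le]
    constructor
    · -- Pq * A - t ≤ 3 e1 (from -(3e1) ≤ t - Pq A)
      have hup : Pq * A ≤ (t + e1) * (1 + e1) :=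
        mul_le_mul hPu (by linarith) hA0 hte
      nlinarith
    · -- t - Pq A ≤ 3 e1
      rcases le_or_gt t e1 with h | h
      · nlinarith [mul_nonneg hPq0 hA0]
      · have hlow : (t - e1) * (1 - e1) ≤ Pq * A :=
          mul_le_mul hPl (by linarith) (by linarith) hPq0
        nlinarith
  rw [← mul_sub, abs_mul, abs_of_pos hDr]
  have hB : (0:ℝ) < 8 * (Dr + 1) := by linarith
  have hc1 : Dr * |t - Pq * A| ≤ Dr * (3 * e1) := mul_le_mul_of_nonneg_left key hDr.le
  have hc2 : Dr * (3 * e1) ≤ Dr * (3 * (ε / (8 * (Dr + 1)))) := by nlinarith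
  have hc3 : Dr * (3 * (ε / (8 * (Dr + 1)))) < ε := by
    have heq : Dr * (3 * (ε / (8 * (Dr + 1)))) = (3 * Dr / (8 * (Dr + 1))) * ε := by
      ring
    rw [heq]
    have hlt : 3 * Dr / (8 * (Dr + 1)) < 1 := by
      rw [div_lt_one hB]; linarith
    nlinarith
  linarith

lemma totient_prod_primes (Q : Finset ℕ) (hQ : ∀ p ∈ Q, p.Prime) :
    Nat.totient (∏ p ∈ Q, p) = ∏ p ∈ Q, (p - 1) := by
  induction Q using Finset.induction_on with
  | empty => simp
  | @insert q s hq ih =>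
    have hqp : q.Prime := hQ q (Finset.mem_insert_self _ _)
    have hs : ∀ p ∈ s, p.Prime := fun p hp => hQ p (Finset.mem_insert_of_mem hp)
    have hcop : Nat.Coprime q (∏ p ∈ s, p) := by
      rw [hqp.coprime_iff_not_dvd]
      intro hdvd
      obtain ⟨p, hps, hqdp⟩ := (hqp.prime.dvd_finset_prod_iff _).mp hdvd
      exact hq (((Nat.prime_dvd_prime_iff_eq hqp (hs p hps)).mp hqdp) ▸ hps)
    rw [Finset.prod_insert hq, Finset.prod_insert hq, Nat.totient_mul hcop,
      Nat.totient_prime hqp, ih hs]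

theorem dense_totient_fraction (a : ℕ) (ha : 0 < a) (b : ℤ) (c d : ℝ) (hc : 0 < c) :
    Set.Ioc (0 : ℝ) ((a : ℝ) * (Nat.totient (Int.gcd a b)) / (c * (Int.gcd a b : ℕ))) ⊆
      closure {y : ℝ | ∃ n : ℕ, 0 < n ∧ 0 < (a : ℤ) * n + b ∧ 0 < c * n + d ∧
        y = (Nat.totient ((a : ℤ) * n + b).toNat : ℝ) / (c * n + d) ∧
        y ≤ (a : ℝ) * (Nat.totient (Int.gcd a b)) / (c * (Int.gcd a b : ℕ))} := by
  intro x hx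
  obtain ⟨hx0, hxD⟩ := hx
  set g : ℕ := Int.gcd (a : ℤ) b with hgdef
  have hg0 : 0 < g := by
    have : (a : ℤ) ≠ 0 := by exact_mod_cast ha.ne'
    exact Int.gcd_pos_of_ne_zero_left b this
  have hga : g ∣ a := by
    have := Int.gcd_dvd_left (a := (a:ℤ)) (b := b)
    exact_mod_cast this
  have hgb : (g : ℤ) ∣ b := Int.gcd_dvd_right _ _
  set a₁ : ℕ := a / g with ha₁def
  have ha₁ : a = g * a₁ := (Nat.mul_div_cancel' hga).symm
  have ha₁0 : 0 < a₁ := by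
    rcases Nat.eq_zero_or_pos a₁ with h | h
    · rw [h, mul_zero] at ha₁; omega
    · exact h
  haveI : NeZero a₁ := ⟨ha₁0.ne'⟩
  set b₁ : ℤ := b / g with hb₁def
  have hb₁ : b = g * b₁ := (Int.mul_ediv_cancel' hgb).symm
  have hcop : Int.gcd (a₁ : ℤ) b₁ = 1 := by
    have h := @Int.gcd_div_gcd_div_gcd (a:ℤ) b (by exact_mod_cast hg0)
    have h2 : ((a₁ : ℕ) : ℤ) = (a : ℤ) / (g : ℤ) := by
      rw [ha₁def]; exact Int.natCast_ediv a g
    rw [h2]; exact h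
  set Dr : ℝ := (a : ℝ) * (Nat.totient g) / (c * g) with hDrdef
  have hφg : 0 < Nat.totient g := Nat.totient_pos.mpr hg0
  have hgR : (0:ℝ) < g := by exact_mod_cast hg0
  have ha₁R : (0:ℝ) < a₁ := by exact_mod_cast ha₁0
  have hφgR : (0:ℝ) < Nat.totient g := by exact_mod_cast hφg
  have haR : (0:ℝ) < a := by exact_mod_cast ha
  have hDr0 : 0 < Dr := by rw [hDrdef]; positivity
  have haRval : (a:ℝ) = g * a₁ := by exact_mod_cast congrArg (Nat.cast : ℕ → ℝ) ha₁
  have hDrval : Dr = (a₁ : ℝ) * (Nat.totient g) / c := by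
    rw [hDrdef, haRval]; field_simp
  set t : ℝ := x / Dr with htdef
  have ht0 : 0 < t := div_pos hx0 hDr0
  have ht1 : t ≤ 1 := (div_le_one hDr0).mpr hxD
  have hxt : x = Dr * t := by rw [htdef]; field_simp
  rw [Metric.mem_closure_iff]
  intro ε hε
  set e1 : ℝ := min 1 (ε / (8 * (Dr + 1))) with he1def
  have he10 : 0 < e1 := lt_min one_pos (by positivity)
  have he1le1 : e1 ≤ 1 := min_le_left _ _
  have he1le : e1 ≤ ε / (8 * (Dr + 1)) := min_le_right _ _
  set E : ℝ := d * a₁ - c * b₁ with hEdef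
  set N₀ : ℕ := max g a₁ with hN₀def
  obtain ⟨P, hPmem, hPrlow, hPrup⟩ := exists_prime_prod_approx t ht0 ht1 N₀ he10
  set Pr : ℝ := ∏ p ∈ P, (1 - 1/(p:ℝ)) with hPrdef
  set Pn : ℕ := ∏ p ∈ P, p with hPndef
  have hPn1 : 1 ≤ Pn := Nat.one_le_iff_ne_zero.mpr (by
    rw [hPndef]
    exact Finset.prod_ne_zero_iff.mpr (fun p hp => (hPmem p hp).1.pos.ne'))
  have hPr_le1 : Pr ≤ 1 := by
    apply Finset.prod_le_one
    · intro p hp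
      have h2 : (2:ℝ) ≤ p := by exact_mod_cast (hPmem p hp).1.two_le
      have : 1/(p:ℝ) ≤ 1/2 := by apply one_div_le_one_div_of_le <;> linarith
      linarith
    · intro p hp
      have h0 : (0:ℝ) < p := by exact_mod_cast (hPmem p hp).1.pos
      have : (0:ℝ) ≤ 1/(p:ℝ) := by positivity
      linarith
  have hPr_pos : 0 < Pr := lt_of_lt_of_le ht0 hPrlow
  -- choose q₁
  set N₁ : ℕ := max (P.sup id) (max N₀ ⌈max (16*(Dr+1)/ε) (|E|/c)⌉₊) with hN₁def
  obtain ⟨q₁, hq₁ge, hq₁p⟩ := Nat.exists_infinite_primes (N₁ + 1)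
  have hq₁P : q₁ ∉ P := fun h => by
    have h1 : q₁ ≤ P.sup id := Finset.le_sup (f := id) h
    have h2 : P.sup id ≤ N₁ := le_max_left _ _
    omega
  have hq₁N₀ : N₀ < q₁ := by
    have : N₀ ≤ N₁ := le_trans (le_max_left _ _) (le_max_right _ _)
    omega
  have hq₁ceil : (⌈max (16*(Dr+1)/ε) (|E|/c)⌉₊ : ℝ) ≤ q₁ := by
    have h1 : ⌈max (16*(Dr+1)/ε) (|E|/c)⌉₊ ≤ N₁ := le_trans (le_max_right _ _) (le_max_right _ _)
    exact_mod_cast le_trans h1 (by omega)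
  have hq₁big : 16*(Dr+1)/ε ≤ q₁ :=
    le_trans (le_trans (le_max_left _ _) (Nat.le_ceil _)) hq₁ceil
  have hq₁E : |E| ≤ c * q₁ := by
    have h1 : |E|/c ≤ q₁ := le_trans (le_trans (le_max_right _ _) (Nat.le_ceil _)) hq₁ceil
    rw [div_le_iff₀ hc] at h1
    linarith [mul_comm c (q₁:ℝ)]
  have hq₁R : (2:ℝ) ≤ q₁ := by exact_mod_cast hq₁p.two_le
  -- units mod a₁
  have hcoprime_Pn_a₁ : Nat.Coprime (Pn * q₁) a₁ := by
    apply Nat.Coprime.mul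
    · rw [hPndef]
      apply Nat.Coprime.prod_left
      intro p hp
      exact ((hPmem p hp).1.coprime_iff_not_dvd).mpr
        (fun hdvd => by
          have h1 := Nat.le_of_dvd ha₁0 hdvd
          have h2 := (hPmem p hp).2
          have h3 : a₁ ≤ N₀ := le_max_right _ _
          omega)
    · exact (hq₁p.coprime_iff_not_dvd).mpr
        (fun hdvd => by
          have h1 := Nat.le_of_dvd ha₁0 hdvd
          have h3 : a₁ ≤ N₀ := le_max_right _ _
          omega)
  have hu : IsUnit ((Pn * q₁ : ℕ) : ZMod a₁) :=
    (ZMod.isUnit_iff_coprime _ _).mpr hcoprime_Pn_a₁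
  have hb₁u : IsUnit ((b₁ : ℤ) : ZMod a₁) := by
    obtain ⟨u, v, huv⟩ := Int.isCoprime_iff_gcd_eq_one.mpr hcop
    have h1 : ((u * a₁ + v * b₁ : ℤ) : ZMod a₁) = 1 := by rw [huv]; simp
    push_cast at h1
    rw [ZMod.natCast_self] at h1
    simp only [mul_zero, zero_add] at h1
    exact IsUnit.of_mul_eq_one _ (by rw [mul_comm]; exact h1)
  obtain ⟨u, huu⟩ := hu
  set r : ZMod a₁ := ((b₁ : ℤ) : ZMod a₁) * ↑u⁻¹ with hrdef
  have hr : IsUnit r := hb₁u.mul (Units.isUnit _)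
  -- choose q₂
  set R : ℝ := (1 + 2*|E| + 8*(Dr+1)*(|E|+1)/ε)/c with hRdef
  set N₂ : ℕ := max q₁ (max b₁.natAbs ⌈R⌉₊) with hN₂def
  obtain ⟨q₂, hq₂gt, hq₂p, hq₂mod⟩ := Nat.forall_exists_prime_gt_and_eq_mod hr N₂
  have hq₂q₁ : q₁ < q₂ := lt_of_le_of_lt (le_max_left _ _) hq₂gt
  have hq₂N₀ : N₀ < q₂ := lt_trans hq₁N₀ hq₂q₁
  have hq₂b₁ : b₁.natAbs < q₂ :=
    lt_of_le_of_lt (le_trans (le_max_left _ _) (le_max_right _ _)) hq₂gt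
  have hq₂R : R < q₂ := by
    have h1 : (⌈R⌉₊:ℝ) ≤ (N₂:ℝ) := by
      exact_mod_cast le_trans (le_max_right _ _) (le_max_right _ _)
    have h2 : (N₂:ℝ) < q₂ := by exact_mod_cast hq₂gt
    linarith [Nat.le_ceil R]
  have hcq₂ : 1 + 2*|E| + 8*(Dr+1)*(|E|+1)/ε ≤ c * q₂ := by
    rw [hRdef, div_lt_iff₀ hc] at hq₂R
    linarith [mul_comm c (q₂:ℝ)]
  have hq₂R2 : (2:ℝ) ≤ q₂ := by exact_mod_cast hq₂p.two_le
  -- the modulus m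
  have hq₂ni : q₂ ∉ insert q₁ P := by
    intro h
    rcases Finset.mem_insert.mp h with h | h
    · omega
    · have h1 : q₂ ≤ P.sup id := Finset.le_sup (f := id) h
      have h2 : P.sup id ≤ N₁ := le_max_left _ _
      omega
  set Q : Finset ℕ := insert q₂ (insert q₁ P) with hQdef
  set m : ℕ := ∏ p ∈ Q, p with hmdef
  have hm : m = q₂ * (q₁ * Pn) := by
    rw [hmdef, hQdef, Finset.prod_insert hq₂ni, Finset.prod_insert hq₁P]
  have hQprime : ∀ p ∈ Q, p.Prime := by
    intro p hp
    rcases Finset.mem_insert.mp hp with rfl | hp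
    · exact hq₂p
    · rcases Finset.mem_insert.mp hp with rfl | hp
      · exact hq₁p
      · exact (hPmem p hp).1
  have hQgt : ∀ p ∈ Q, N₀ < p := by
    intro p hp
    rcases Finset.mem_insert.mp hp with rfl | hp
    · exact hq₂N₀
    · rcases Finset.mem_insert.mp hp with rfl | hp
      · exact hq₁N₀
      · exact (hPmem p hp).2
  have hmq₂ : q₂ ≤ m := by
    rw [hm]
    have h1 : 1 ≤ q₁ * Pn := Nat.one_le_iff_ne_zero.mpr
      (Nat.mul_ne_zero hq₁p.pos.ne' (by omega))
    calc q₂ = q₂ * 1 := (mul_one q₂).symm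
      _ ≤ q₂ * (q₁ * Pn) := Nat.mul_le_mul_left q₂ h1
  have hm1 : 1 ≤ m := le_trans hq₂p.pos hmq₂
  -- congruence
  have hmmod : ((m : ℕ) : ZMod a₁) = ((b₁:ℤ) : ZMod a₁) := by
    rw [hm]
    push_cast
    rw [hq₂mod]
    have hPnq₁ : ((q₁ : ZMod a₁)) * ((Pn : ZMod a₁)) = ↑u := by
      rw [huu]; push_cast; ring
    calc r * ((q₁: ZMod a₁) * (Pn : ZMod a₁)) = ((b₁:ℤ) : ZMod a₁) * (↑u⁻¹ * ↑u) := by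
          rw [hPnq₁, hrdef]; ring
      _ = ((b₁:ℤ) : ZMod a₁) := by rw [u.inv_mul, mul_one]
  have hdvd : (a₁:ℤ) ∣ ((m:ℤ) - b₁) := by
    have h0 : (((m:ℤ) - b₁ : ℤ) : ZMod a₁) = 0 := by
      push_cast
      rw [hmmod]
      ring
    exact_mod_cast (ZMod.intCast_zmod_eq_zero_iff_dvd _ _).mp h0
  obtain ⟨k, hk⟩ := hdvd
  have hb₁m : b₁ < (m:ℤ) := by
    have h1 : b₁ ≤ (b₁.natAbs : ℤ) := Int.le_natAbs
    have h2 : (q₂:ℤ) ≤ m := by exact_mod_cast hmq₂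
    have h3 : (b₁.natAbs : ℤ) < q₂ := by exact_mod_cast hq₂b₁
    omega
  have hk0 : 0 < k := by
    rcases le_or_gt k 0 with h | h
    · exfalso
      have h1 : (a₁:ℤ) * k ≤ 0 := mul_nonpos_of_nonneg_of_nonpos (by positivity) h
      linarith
    · exact h
  set n : ℕ := k.toNat with hndef
  have hn : (n:ℤ) = k := Int.toNat_of_nonneg hk0.le
  have hn0 : 0 < n := by
    have : (0:ℤ) < n := hn ▸ hk0
    exact_mod_cast this
  have hkey : (a:ℤ) * n + b = (g:ℤ) * m := by
    have haZ : (a:ℤ) = (g:ℤ) * a₁ := by exact_mod_cast congrArg (Nat.cast : ℕ → ℤ) ha₁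
    rw [haZ, hb₁, hn]
    linear_combination (-(g:ℤ)) * hk
  have htoNat : ((a:ℤ) * n + b).toNat = g * m := by
    rw [hkey, ← Nat.cast_mul, Int.toNat_natCast]
  -- totient
  have hcop_gm : Nat.Coprime g m := by
    rw [hmdef]
    apply Nat.Coprime.prod_right
    intro p hp
    exact (((hQprime p hp).coprime_iff_not_dvd).mpr (fun hdvd => by
      have h1 := Nat.le_of_dvd hg0 hdvd
      have h2 := hQgt p hp
      have h3 : g ≤ N₀ := le_max_left _ _
      omega)).symm
  -- real facts
  have hmR : (m:ℝ) = q₂ * (q₁ * Pn) := by exact_mod_cast congrArg (Nat.cast : ℕ → ℝ) hm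
  have hPnR1 : (1:ℝ) ≤ Pn := by exact_mod_cast hPn1
  have hmRq₂ : (q₂:ℝ) ≤ m := by exact_mod_cast hmq₂
  have habs := abs_nonneg E
  have hnegabs := neg_abs_le E
  have hKpos : (0:ℝ) ≤ 8*(Dr+1)*(|E|+1)/ε := by positivity
  have hcm : 1 + 2*|E| + 8*(Dr+1)*(|E|+1)/ε ≤ c * m := by
    have h1 : c * q₂ ≤ c * m := mul_le_mul_of_nonneg_left hmRq₂ hc.le
    linarith
  have hdenpos : 0 < c * m + E := by linarith
  have hnR : (a₁:ℝ) * n = (m:ℝ) - b₁ := by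
    have hZ : (a₁:ℤ) * (n:ℤ) = (m:ℤ) - b₁ := by rw [hn]; linarith [hk]
    have := congrArg (fun z : ℤ => (z:ℝ)) hZ
    push_cast at this
    exact this
  have hden : c * n + d = (c * m + E)/a₁ := by
    rw [hEdef]
    field_simp
    linear_combination c * hnR
  have hdenpos' : 0 < c * n + d := by rw [hden]; positivity
  -- Pq
  set Pq : ℝ := ∏ p ∈ Q, (1 - 1/(p:ℝ)) with hPqdef
  have hPq : Pq = (1 - 1/(q₂:ℝ)) * ((1 - 1/(q₁:ℝ)) * Pr) := by
    rw [hPqdef, hQdef, Finset.prod_insert hq₂ni, Finset.prod_insert hq₁P]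
  have hq₁inv : 0 < 1 - 1/(q₁:ℝ) := by
    have : 1/(q₁:ℝ) ≤ 1/2 := by apply one_div_le_one_div_of_le <;> linarith
    linarith
  have hq₂inv : 0 < 1 - 1/(q₂:ℝ) := by
    have : 1/(q₂:ℝ) ≤ 1/2 := by apply one_div_le_one_div_of_le <;> linarith
    linarith
  have hq₁invle : 1 - 1/(q₁:ℝ) ≤ 1 := by
    have : (0:ℝ) ≤ 1/(q₁:ℝ) := by positivity
    linarith
  have hq₂invle : 1 - 1/(q₂:ℝ) ≤ 1 := by
    have : (0:ℝ) ≤ 1/(q₂:ℝ) := by positivity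
    linarith
  have hPq_pos : 0 < Pq := by rw [hPq]; positivity
  have hPq_lePr : Pq ≤ Pr := by
    rw [hPq]
    calc (1 - 1/(q₂:ℝ)) * ((1 - 1/(q₁:ℝ)) * Pr) ≤ (1 - 1/(q₁:ℝ)) * Pr :=
          mul_le_of_le_one_left (mul_nonneg hq₁inv.le hPr_pos.le) hq₂invle
      _ ≤ Pr := mul_le_of_le_one_left hPr_pos.le hq₁invle
  have hPq_le1 : Pq ≤ 1 := le_trans hPq_lePr hPr_le1
  have hφmR : (Nat.totient m : ℝ) = Pq * m := by
    have h1 : Nat.totient m = ∏ p ∈ Q, (p - 1) := by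
      rw [hmdef]; exact totient_prod_primes Q hQprime
    rw [h1, hPqdef, hmdef, Nat.cast_prod, Nat.cast_prod, ← Finset.prod_mul_distrib]
    apply Finset.prod_congr rfl
    intro p hp
    have hp2 : 2 ≤ p := (hQprime p hp).two_le
    have hc1 : ((p - 1 : ℕ) : ℝ) = (p:ℝ) - 1 := by
      have h1p : 1 ≤ p := by omega
      push_cast [h1p]
      ring
    have hpne : (p:ℝ) ≠ 0 := by
      have : (0:ℝ) < p := by exact_mod_cast (hQprime p hp).pos
      linarith
    rw [hc1]
    field_simp
  have hφgm : (Nat.totient (g*m) : ℝ) = (Nat.totient g) * (Pq * m) := by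
    rw [Nat.totient_mul hcop_gm]
    push_cast
    rw [hφmR]
  set y : ℝ := (Nat.totient (g * m) : ℝ) / (c * n + d) with hydef
  have hy : y = Dr * (Pq * (c * m / (c * m + E))) := by
    rw [hydef, hφgm, hden, hDrval]
    field_simp
  -- bounds
  set A : ℝ := c * m / (c * m + E) with hAdef
  have hmRpos : (0:ℝ) < m := by exact_mod_cast hm1
  have hA_pos : 0 ≤ A := by positivity
  have hA2 : A ≤ 2 := by
    rw [hAdef, div_le_iff₀ hdenpos]
    linarith
  have hεDr : (ε / (8 * (Dr + 1))) * (8*(Dr+1)*(|E|+1)/ε) = |E|+1 := by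
    field_simp
  have hA1 : |A - 1| ≤ e1 := by
    have hAsub : A - 1 = -E / (c*m+E) := by
      rw [hAdef]; field_simp; ring
    rw [hAsub, abs_div, abs_of_pos hdenpos, abs_neg, div_le_iff₀ hdenpos]
    rcases le_total 1 (ε / (8 * (Dr + 1))) with h | h
    · have he1eq : e1 = 1 := min_eq_left h
      rw [he1eq, one_mul]
      linarith
    · have he1eq : e1 = ε / (8 * (Dr + 1)) := min_eq_right h
      rw [he1eq]
      have hKle : 8*(Dr+1)*(|E|+1)/ε ≤ c*m+E := by linarith
      have h2 : (ε / (8 * (Dr + 1))) * (8*(Dr+1)*(|E|+1)/ε) ≤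
          (ε / (8 * (Dr + 1))) * (c*m+E) :=
        mul_le_mul_of_nonneg_left hKle (by positivity)
      calc |E| ≤ |E| + 1 := by linarith
        _ = (ε / (8 * (Dr + 1))) * (8*(Dr+1)*(|E|+1)/ε) := hεDr.symm
        _ ≤ _ := h2
  have hq₁small : 2/(q₁:ℝ) ≤ e1 := by
    apply le_min
    · rw [div_le_one (by linarith)]; linarith
    · apply aux_two_div _ _ _ (by positivity) hε
      calc 2 * (8 * (Dr + 1)) / ε = 16*(Dr+1)/ε := by ring_nf
        _ ≤ q₁ := hq₁big
  have hPq_up : Pq ≤ t + e1 := le_trans hPq_lePr hPrup.le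
  have hPq_low : t - e1 ≤ Pq := by
    rw [hPq]
    have hq₁pos : (0:ℝ) < q₁ := by linarith
    have hq₂pos : (0:ℝ) < q₂ := by linarith
    have hle : 1/(q₂:ℝ) ≤ 1/(q₁:ℝ) := by
      apply one_div_le_one_div_of_le hq₁pos
      exact_mod_cast hq₂q₁.le
    have h1 : (1 - 1/(q₂:ℝ)) * ((1 - 1/(q₁:ℝ)) * Pr) ≥ Pr - 1/(q₁:ℝ) - 1/(q₂:ℝ) :=
      aux_prod_lower _ _ _ (by positivity) (by positivity) hPr_pos.le hPr_le1 (by positivity)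
    have h2 : Pr - 1/(q₁:ℝ) - 1/(q₂:ℝ) ≥ t - 2/(q₁:ℝ) := by
      have h2q : 2/(q₁:ℝ) = 1/(q₁:ℝ) + 1/(q₁:ℝ) := by ring
      have := hPrlow
      linarith [hle, h2q]
    linarith [hq₁small]
  -- final assembly
  refine ⟨y, ⟨n, hn0, ?_, ?_, ?_, ?_⟩, ?_⟩
  · rw [hkey]
    have : (0:ℤ) < (g:ℤ) * (m:ℤ) := by
      have h1 : (0:ℤ) < g := by exact_mod_cast hg0
      have h2 : (0:ℤ) < m := by exact_mod_cast hm1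
      positivity
    exact_mod_cast this
  · exact hdenpos'
  · rw [htoNat]
  · -- y ≤ Dr
    rw [hy]
    have hstep : Pq * (c*m) ≤ c*m + E := by
      have hq₂pos : (0:ℝ) < q₂ := by linarith
      have hcmq : (c*m) * (1/(q₂:ℝ)) = c * (q₁ * Pn) := by
        rw [hmR]; field_simp
      have hfac : (1 - 1/(q₁:ℝ)) * Pr ≤ 1 :=
        aux_mul_le_one _ _ hq₁inv.le hq₁invle hPr_pos.le hPr_le1
      have hfacpos : 0 ≤ (1 - 1/(q₁:ℝ)) * Pr := by positivity
      have hcm_pos : (0:ℝ) < c*m := by positivity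
      have h1 : Pq * (c*m) ≤ (1 - 1/(q₂:ℝ)) * (c*m) := by
        rw [hPq]
        apply mul_le_mul_of_nonneg_right _ hcm_pos.le
        exact mul_le_of_le_one_right hq₂inv.le hfac
      have h2 : (1 - 1/(q₂:ℝ)) * (c*m) = c*m - c*(q₁*Pn) := by
        rw [← hcmq]; ring
      have h3 : c * q₁ ≤ c * (q₁ * Pn) := by
        apply mul_le_mul_of_nonneg_left _ hc.le
        have hq₁pos : (0:ℝ) < q₁ := by linarith
        exact le_mul_of_one_le_right hq₁pos.le hPnR1
      linarith [hq₁E, neg_abs_le E]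
    have hPqA : Pq * A ≤ 1 := by
      rw [hAdef, mul_div_assoc'] at *
      rw [div_le_one hdenpos]
      linarith [hstep]
    calc Dr * (Pq * (c * m / (c * m + E))) = Dr * (Pq * A) := by rw [hAdef]
      _ ≤ Dr * 1 := mul_le_mul_of_nonneg_left hPqA hDr0.le
      _ = Dr := mul_one Dr
  · -- dist
    rw [Real.dist_eq, hxt, hy]
    exact aux_dist Dr t e1 A Pq ε hDr0 hε ht1 he1le1 he1le hA_pos hA1 hPq_pos.le hPq_low hPq_up
end

section
/- Let a ∈ ℕ, b ∈ ℤ, c ∈ ℝ with c > 0, and d ∈ ℝ. Then limsup_{n→∞} φ(an+b)/(cn+d) = a·φ(gcd(a,b))/(c·gcd(a,b)) and liminf_{n→∞} φ(an+b)/(cn+d) = 0, where n ranges over positive integers. -/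
open Filter

lemma prime_factor_aux {p : ℕ} (hp : p.Prime) : 0 ≤ 1 - (p:ℝ)⁻¹ ∧ 1 - (p:ℝ)⁻¹ ≤ 1 := by
  have h0 : (0:ℝ) < p := by exact_mod_cast hp.pos
  have h1 : (1:ℝ) ≤ p := by exact_mod_cast hp.one_lt.le
  have hi0 : (0:ℝ) < (p:ℝ)⁻¹ := inv_pos.mpr h0
  have hi1 : (p:ℝ)⁻¹ ≤ 1 := by
    rw [inv_le_one_iff₀]; right; exact h1
  constructor <;> linarith

lemma tendstoLin (α β c d : ℝ) (hc : 0 < c) :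
    Tendsto (fun n : ℕ => (α * n + β) / (c * n + d)) atTop (nhds (α / c)) := by
  have h1 : Tendsto (fun n : ℕ => ((n : ℝ))⁻¹) atTop (nhds 0) :=
    tendsto_inv_atTop_nhds_zero_nat
  have hnum : Tendsto (fun n : ℕ => α + β * ((n : ℝ))⁻¹) atTop (nhds α) := by
    simpa using tendsto_const_nhds.add (h1.const_mul β)
  have hden : Tendsto (fun n : ℕ => c + d * ((n : ℝ))⁻¹) atTop (nhds c) := by
    simpa using tendsto_const_nhds.add (h1.const_mul d)
  have := hnum.div hden hc.ne'
  refine this.congr' ?_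
  filter_upwards [eventually_ge_atTop 1] with n hn
  have hn0 : ((n : ℝ)) ≠ 0 := by positivity
  have e1 : α * n + β = (α + β * ((n:ℝ))⁻¹) * n := by field_simp
  have e2 : c * n + d = (c + d * ((n:ℝ))⁻¹) * n := by field_simp
  show (α + β * ((n:ℝ))⁻¹) / (c + d * ((n:ℝ))⁻¹) = _
  rw [e1, e2, mul_div_mul_right _ _ hn0]

lemma totient_formula_real (n : ℕ) :
    (Nat.totient n : ℝ) = n * ∏ p ∈ n.primeFactors, (1 - (p : ℝ)⁻¹) := by
  have h := Nat.totient_eq_mul_prod_factors n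
  have : ((Nat.totient n : ℚ) : ℝ) = ((n : ℚ) * ∏ p ∈ n.primeFactors, (1 - (p : ℚ)⁻¹) : ℚ) := by
    exact_mod_cast congrArg (fun q : ℚ => (q : ℝ)) h
  push_cast at this
  exact this

lemma totient_le_prod {N : ℕ} {S : Finset ℕ} (hS : S ⊆ N.primeFactors) :
    (Nat.totient N : ℝ) ≤ N * ∏ p ∈ S, (1 - (p : ℝ)⁻¹) := by
  rw [totient_formula_real]
  refine mul_le_mul_of_nonneg_left ?_ (Nat.cast_nonneg N)
  rw [← Finset.prod_sdiff hS]
  have h1 : ∏ p ∈ N.primeFactors \ S, (1 - (p : ℝ)⁻¹) ≤ 1 :=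
    Finset.prod_le_one
      (fun p hp => (prime_factor_aux (Nat.prime_of_mem_primeFactors (Finset.mem_sdiff.mp hp).1)).1)
      (fun p hp => (prime_factor_aux (Nat.prime_of_mem_primeFactors (Finset.mem_sdiff.mp hp).1)).2)
  have h2 : (0:ℝ) ≤ ∏ p ∈ S, (1 - (p : ℝ)⁻¹) :=
    Finset.prod_nonneg fun p hp => (prime_factor_aux (Nat.prime_of_mem_primeFactors (hS hp))).1
  exact mul_le_of_le_one_left h2 h1

lemma totient_mul_le_real {g m : ℕ} (hg : g ≠ 0) (hm : m ≠ 0) :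
    (Nat.totient (g * m) : ℝ) ≤ (Nat.totient g : ℝ) * m := by
  have hsub : g.primeFactors ⊆ (g * m).primeFactors :=
    Nat.primeFactors_mono (Dvd.intro m rfl) (by positivity)
  have := totient_le_prod hsub
  rw [totient_formula_real g]
  calc (Nat.totient (g*m) : ℝ) ≤ (g*m : ℕ) * ∏ p ∈ g.primeFactors, (1 - (p : ℝ)⁻¹) := this
    _ = ((g : ℝ) * ∏ p ∈ g.primeFactors, (1 - (p : ℝ)⁻¹)) * m := by push_cast; ring

lemma exists_finset_primes (a : ℕ) {δ : ℝ} (hδ : 0 < δ) :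
    ∃ S : Finset ℕ, (∀ p ∈ S, p.Prime ∧ a < p) ∧ ∏ p ∈ S, (1 - (p : ℝ)⁻¹) < δ := by
  set f : ℕ → ℝ := Set.indicator {p | p.Prime ∧ a < p} (fun n : ℕ => 1 / n) with hf
  have hf0 : 0 ≤ f := fun n => Set.indicator_nonneg (fun p _ => by positivity) n
  have hns : ¬ Summable f := by
    intro hs
    apply not_summable_one_div_on_primes
    set g : ℕ → ℝ := Set.indicator {p | p.Prime ∧ p ≤ a} (fun n : ℕ => 1 / n) with hg
    have hgs : Summable g := by
      apply summable_of_finite_support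
      apply Set.Finite.subset (Set.finite_Icc 0 a)
      intro x hx
      simp only [Function.mem_support] at hx
      by_contra hxa
      simp only [Set.mem_Icc, not_and, not_le] at hxa
      exact hx (Set.indicator_of_notMem (fun h => absurd h.2 (by omega)) _)
    have heq : Set.indicator {p : ℕ | p.Prime} (fun n : ℕ => (1:ℝ) / n) = f + g := by
      funext p
      simp only [hf, hg, Pi.add_apply, Set.indicator_apply, Set.mem_setOf_eq]
      by_cases hp : p.Prime <;> by_cases hap : a < p <;>
        simp [hp, hap, show ¬ a < p → p ≤ a from by omega] <;> omega
    rw [heq]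
    exact hs.add hgs
  have key : ∀ M : ℝ, ∃ u : Finset ℕ, M < ∑ x ∈ u, f x := by
    intro M
    by_contra h
    push_neg at h
    exact hns (summable_of_sum_le hf0 h)
  obtain ⟨u, hu⟩ := key (max 0 (- Real.log δ) + 1)
  set S := u.filter (fun p => p.Prime ∧ a < p) with hS
  have hmem : ∀ p ∈ S, p.Prime ∧ a < p := fun p hp => (Finset.mem_filter.mp hp).2
  refine ⟨S, hmem, ?_⟩
  have hsum : ∑ x ∈ u, f x = ∑ p ∈ S, ((p:ℝ))⁻¹ := by
    rw [hS, Finset.sum_filter]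
    apply Finset.sum_congr rfl
    intro p _
    simp [hf, Set.indicator_apply, one_div]
  rw [hsum] at hu
  have h1 : ∏ p ∈ S, (1 - (p:ℝ)⁻¹) ≤ ∏ p ∈ S, Real.exp (-((p:ℝ))⁻¹) := by
    apply Finset.prod_le_prod
    · intro p hp
      have hp2 := (hmem p hp).1
      have h0 : (0:ℝ) < p := by exact_mod_cast hp2.pos
      have : (p:ℝ)⁻¹ ≤ 1 := by rw [inv_le_one_iff₀]; right; exact_mod_cast hp2.one_lt.le
      linarith
    · intro p hp
      have := Real.add_one_le_exp (-((p:ℝ))⁻¹)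
      linarith
  rw [← Real.exp_sum] at h1
  calc ∏ p ∈ S, (1 - (p:ℝ)⁻¹) ≤ Real.exp (∑ p ∈ S, -((p:ℝ))⁻¹) := h1
    _ < δ := by
        rw [← Real.exp_log hδ]
        apply Real.exp_lt_exp.mpr
        have hneg : ∑ p ∈ S, -((p:ℝ))⁻¹ = - ∑ p ∈ S, ((p:ℝ))⁻¹ := by simp
        rw [hneg]
        have := le_max_right (0:ℝ) (- Real.log δ)
        linarith

lemma exists_n_dvd (a : ℕ) (ha : 0 < a) (b : ℤ) (S : Finset ℕ)
    (hS : ∀ p ∈ S, p.Prime ∧ a < p) :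
    ∀ M : ℕ, ∃ n : ℕ, M ≤ n ∧ ∀ p ∈ S, (p : ℤ) ∣ ((a : ℤ) * n + b) := by
  intro M
  set P : ℕ := ∏ p ∈ S, p with hP
  have hPpos : 0 < P := Finset.prod_pos fun p hp => (hS p hp).1.pos
  have hcop : Nat.Coprime a P := Nat.Coprime.prod_right fun p hp => by
    have hp1 := (hS p hp).1
    have hap := (hS p hp).2
    have hnd : ¬ p ∣ a := fun hdvd => Nat.lt_irrefl _ (lt_of_lt_of_le hap (Nat.le_of_dvd ha hdvd))
    exact (hp1.coprime_iff_not_dvd.mpr hnd).symm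
  obtain ⟨u, v, huv⟩ := Nat.isCoprime_iff_coprime.mpr hcop
  set s : ℤ := -b * u with hs
  have hdvds : (P : ℤ) ∣ (a : ℤ) * s + b := by
    refine ⟨b * v, ?_⟩
    have : (1 : ℤ) - u * a = v * P := by linarith
    calc (a : ℤ) * s + b = b * (1 - u * a) := by rw [hs]; ring
      _ = (P : ℤ) * (b * v) := by rw [this]; ring
  set t : ℤ := s + (M + s.natAbs) * P with ht
  have htM : (M : ℤ) ≤ t := by
    have h1 : (1 : ℤ) ≤ P := by exact_mod_cast hPpos
    have h2 : (M + s.natAbs : ℤ) * 1 ≤ (M + s.natAbs : ℤ) * P :=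
      mul_le_mul_of_nonneg_left h1 (by positivity)
    rw [ht]
    push_cast at h2 ⊢
    linarith [neg_abs_le s]
  refine ⟨t.toNat, ?_, ?_⟩
  · exact_mod_cast Int.le_toNat (le_trans (by positivity) htM) |>.mpr htM
  · intro p hp
    have hpP : (p : ℤ) ∣ (P : ℤ) := Int.natCast_dvd_natCast.mpr (Finset.dvd_prod_of_mem _ hp)
    have htn : (t.toNat : ℤ) = t := Int.toNat_of_nonneg (le_trans (by positivity) htM)
    rw [htn, ht]
    have : (a : ℤ) * (s + (M + s.natAbs) * P) + b
        = ((a : ℤ) * s + b) + (a * (M + s.natAbs)) * P := by ring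
    rw [this]
    exact dvd_add (hpP.trans hdvds) (hpP.trans (dvd_mul_left _ _))

lemma le_of_forall_pos_add' {x y : ℝ} (h : ∀ ε : ℝ, 0 < ε → x ≤ y + ε) : x ≤ y := by
  by_contra hxy
  push_neg at hxy
  have := h ((x - y) / 2) (by linarith)
  linarith

theorem limsup_liminf_totient_fraction (a : ℕ) (ha : 0 < a) (b : ℤ) (c d : ℝ) (hc : 0 < c) :
    limsup (fun n : ℕ => (Nat.totient ((a : ℤ) * n + b).toNat : ℝ) / (c * n + d)) atTop =
      (a : ℝ) * (Nat.totient (Int.gcd a b)) / (c * (Int.gcd a b : ℕ)) ∧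
    liminf (fun n : ℕ => (Nat.totient ((a : ℤ) * n + b).toNat : ℝ) / (c * n + d)) atTop = 0 := by
  set f : ℕ → ℝ := fun n : ℕ => (Nat.totient ((a : ℤ) * n + b).toNat : ℝ) / (c * n + d) with hfdef
  set g : ℕ := Int.gcd (a : ℤ) b with hgdef
  have hgpos : 0 < g := Int.gcd_pos_iff.mpr (Or.inl (by exact_mod_cast ha.ne'))
  have hga : g ∣ a := by
    have h := Int.gcd_dvd_left (a := (a : ℤ)) (b := b)
    exact_mod_cast h
  set a' : ℕ := a / g with ha'def
  have haa : a = g * a' := (Nat.mul_div_cancel' hga).symm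
  have ha' : 0 < a' := by
    rcases Nat.eq_zero_or_pos a' with h | h
    · rw [h, mul_zero] at haa; omega
    · exact h
  have hgb : (g : ℤ) ∣ b := Int.gcd_dvd_right _ _
  set b' : ℤ := b / (g : ℤ) with hb'def
  have hbb : b = (g : ℤ) * b' := (Int.mul_ediv_cancel' hgb).symm
  have hcop : Int.gcd (a' : ℤ) b' = 1 := by
    have h := Int.gcd_div_gcd_div_gcd (i := (a : ℤ)) (j := b) hgpos
    have h2 : (a : ℤ) / (Int.gcd (a : ℤ) b : ℤ) = (a' : ℤ) := by
      rw [← hgdef, ha'def]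
      exact (Int.natCast_div a g).symm
    rw [h2] at h
    rw [← hgdef] at h
    exact h
  set L : ℝ := (a' : ℝ) * (Nat.totient g) / c with hLdef
  have hgne : (g : ℝ) ≠ 0 := Nat.cast_ne_zero.mpr hgpos.ne'
  have hLeq : (a : ℝ) * (Nat.totient g) / (c * (g : ℕ)) = L := by
    rw [hLdef, haa]
    push_cast
    field_simp
  have hcd_top : Tendsto (fun n : ℕ => c * n + d) atTop atTop := by
    apply tendsto_atTop_add_const_right
    exact (tendsto_natCast_atTop_atTop).const_mul_atTop hc
  have hpos : ∀ᶠ n : ℕ in atTop, 0 < c * n + d := hcd_top.eventually_gt_atTop 0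
  have hint : ∀ᶠ n : ℕ in atTop, 1 ≤ (a' : ℤ) * n + b' := by
    rw [eventually_atTop]
    refine ⟨b'.natAbs + 1, fun n hn => ?_⟩
    have h1 : (1 : ℤ) ≤ (a' : ℤ) := by exact_mod_cast ha'
    have h2 : (b'.natAbs : ℤ) + 1 ≤ (n : ℤ) := by exact_mod_cast hn
    have h3 : -((b'.natAbs : ℤ)) ≤ b' := by
      rcases Int.natAbs_eq b' with h | h <;> omega
    have h4 : 1 * (n : ℤ) ≤ (a' : ℤ) * n := mul_le_mul_of_nonneg_right h1 (by positivity)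
    linarith
  set φg : ℝ := (Nat.totient g : ℝ) with hφg
  set u : ℕ → ℝ := fun n => (φg * a' * n + φg * b') / (c * n + d) with hu
  have htu : Tendsto u atTop (nhds L) := by
    have h := tendstoLin (φg * a') (φg * b') c d hc
    have he : φg * a' / c = L := by rw [hLdef]; ring
    rw [he] at h; exact h
  have hfu : ∀ᶠ n in atTop, f n ≤ u n := by
    filter_upwards [hint, hpos] with n h1 h2
    set m : ℕ := ((a' : ℤ) * n + b').toNat with hm
    have hmz : (m : ℤ) = (a' : ℤ) * n + b' := Int.toNat_of_nonneg (by linarith)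
    have hm1 : m ≠ 0 := by
      intro h; rw [h] at hmz; simp at hmz; omega
    have hacast : (a : ℤ) = (g : ℤ) * (a' : ℤ) := by exact_mod_cast haa
    have hxe : ((g * m : ℕ) : ℤ) = (a : ℤ) * n + b := by
      push_cast [hmz]
      rw [hacast, hbb]; ring
    have hNg : ((a : ℤ) * n + b).toNat = g * m := by
      rw [← hxe, Int.toNat_natCast]
    have hkey := totient_mul_le_real hgpos.ne' hm1
    have hmr : (m : ℝ) = (a' : ℝ) * n + b' := by exact_mod_cast hmz
    show (Nat.totient (((a : ℤ) * n + b).toNat) : ℝ) / (c * n + d) ≤ u n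
    rw [hNg]
    have hueq : u n = (φg * m) / (c * n + d) := by
      show (φg * a' * n + φg * b') / (c * n + d) = _
      rw [hmr]; ring_nf
    rw [hueq]
    exact (div_le_div_iff_of_pos_right h2).mpr hkey
  have hf0 : ∀ᶠ n in atTop, 0 ≤ f n := by
    filter_upwards [hpos] with n h2
    exact div_nonneg (Nat.cast_nonneg _) h2.le
  have hbdd : IsBoundedUnder (· ≤ ·) atTop f := (htu.isBoundedUnder_le).mono_le hfu
  have hlimsup : limsup f atTop = L := by
    apply le_antisymm
    · apply le_of_forall_pos_add'
      intro ε hε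
      have hev : ∀ᶠ n in atTop, f n ≤ L + ε := by
        filter_upwards [htu.eventually_lt_const (show L < L + ε by linarith), hfu] with n h3 h4
        linarith
      exact limsup_le_of_le (isCoboundedUnder_le_of_eventually_le atTop hf0) hev
    · apply le_of_forall_pos_add'
      intro ε hε
      have hfreq : ∃ᶠ n in atTop, L - ε ≤ f n := by
        haveI : NeZero a' := ⟨ha'.ne'⟩
        have hcop' : Nat.Coprime a' b'.natAbs := by
          have h := hcop
          simp only [Int.gcd, Int.natAbs_natCast] at h
          exact h
        have hunit : IsUnit ((b' : ZMod a')) := by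
          have hu1 : IsUnit ((b'.natAbs : ZMod a')) :=
            (ZMod.isUnit_iff_coprime b'.natAbs a').mpr hcop'.symm
          rcases Int.natAbs_eq b' with h | h
          · rw [h, Int.cast_natCast]; exact hu1
          · rw [h, Int.cast_neg, Int.cast_natCast]; exact hu1.neg
        set F : ℕ → ℝ := fun p => ((φg * a') * p + (-(φg * a'))) / (c * p + (a' * d - c * b'))
          with hF
        have htF : Tendsto F atTop (nhds L) := by
          have h := tendstoLin (φg * a') (-(φg * a')) c (a' * d - c * b') hc
          have he : φg * a' / c = L := by rw [hLdef]; ring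
          rw [he] at h; exact h
        have hFev := htF.eventually_const_lt (show L - ε < L by linarith)
        obtain ⟨M₀, hM₀⟩ := eventually_atTop.mp hFev
        rw [frequently_atTop]
        intro M
        obtain ⟨p, hpB, hpp, hpz⟩ :=
          Nat.forall_exists_prime_gt_and_eq_mod hunit (M₀ + g + a' * M + b'.natAbs)
        have hdvd : (a' : ℤ) ∣ (p : ℤ) - b' := by
          have h5 : ((p : ℤ) : ZMod a') = ((b' : ℤ) : ZMod a') := by
            rw [Int.cast_natCast]; exact hpz
          exact ((ZMod.intCast_eq_intCast_iff _ _ _).mp h5).symm.dvd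
        set q : ℤ := ((p : ℤ) - b') / (a' : ℤ) with hqd
        have hqe : (a' : ℤ) * q = (p : ℤ) - b' := Int.mul_ediv_cancel' hdvd
        have hbp : b' < (p : ℤ) := by
          have h6 : b'.natAbs < p := by omega
          have h7 : (b'.natAbs : ℤ) < (p : ℤ) := by exact_mod_cast h6
          rcases Int.natAbs_eq b' with h | h <;> omega
        have hq0 : 0 < q := by
          rcases lt_or_ge 0 q with h | h
          · exact h
          · exfalso
            have h8 : (a' : ℤ) * q ≤ 0 :=
              mul_nonpos_of_nonneg_of_nonpos (by positivity) h
            linarith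
        have hqM : (M : ℤ) < q := by
          have h9 : a' * M + b'.natAbs < p := by omega
          have h9' : ((a' * M + b'.natAbs : ℕ) : ℤ) < (p : ℤ) := by exact_mod_cast h9
          have h10 : b' ≤ |b'| := le_abs_self b'
          have h8 : (a' : ℤ) * M < (a' : ℤ) * q := by
            rw [hqe]
            push_cast at h9'
            linarith
          exact lt_of_mul_lt_mul_left h8 (by positivity)
        refine ⟨q.toNat, (Int.le_toNat hq0.le).mpr hqM.le, ?_⟩
        set n : ℕ := q.toNat with hn
        have hnq : (n : ℤ) = q := Int.toNat_of_nonneg hq0.le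
        have hacast : (a : ℤ) = (g : ℤ) * (a' : ℤ) := by exact_mod_cast haa
        have hxe2 : ((g * p : ℕ) : ℤ) = (a : ℤ) * n + b := by
          push_cast
          rw [hacast, hbb, hnq]
          linear_combination (-(g : ℤ)) * hqe
        have hNg2 : ((a : ℤ) * n + b).toNat = g * p := by rw [← hxe2, Int.toNat_natCast]
        have hgp : Nat.Coprime g p := by
          have hnd : ¬ p ∣ g := fun hdl => absurd (Nat.le_of_dvd hgpos hdl) (by omega)
          exact (hpp.coprime_iff_not_dvd.mpr hnd).symm
        have hphi : Nat.totient (g * p) = Nat.totient g * (p - 1) := by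
          rw [Nat.totient_mul hgp, Nat.totient_prime hpp]
        have hcast : ((Nat.totient (g * p) : ℕ) : ℝ) = φg * ((p : ℝ) - 1) := by
          rw [hphi, Nat.cast_mul, Nat.cast_sub hpp.one_lt.le, Nat.cast_one, hφg]
        have hfeq : f n = F p := by
          show (Nat.totient (((a : ℤ) * n + b).toNat) : ℝ) / (c * n + d) = F p
          rw [hNg2, hcast, hF]
          show _ = ((φg * a') * p + (-(φg * a'))) / (c * p + (a' * d - c * b'))
          have hqz : (a' : ℤ) * n = (p : ℤ) - b' := by rw [hnq]; exact hqe
          have hqr : (a' : ℝ) * n = (p : ℝ) - (b' : ℝ) := by exact_mod_cast hqz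
          have hdeq : c * (p : ℝ) + (a' * d - c * b') = (a' : ℝ) * (c * n + d) := by
            linear_combination (-c) * hqr
          rw [hdeq,
            show (φg * a') * (p : ℝ) + (-(φg * a')) = (a' : ℝ) * (φg * ((p : ℝ) - 1)) by ring,
            mul_div_mul_left _ _ (show (a' : ℝ) ≠ 0 by positivity)]
        rw [hfeq]
        exact (hM₀ p (by omega)).le
      have h := le_limsup_of_frequently_le hfreq hbdd
      linarith
  have hposN : ∀ᶠ n : ℕ in atTop, 0 < (a : ℤ) * n + b := by
    rw [eventually_atTop]
    refine ⟨b.natAbs + 1, fun n hn => ?_⟩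
    have h1 : (1 : ℤ) ≤ (a : ℤ) := by exact_mod_cast ha
    have h2 : (b.natAbs : ℤ) + 1 ≤ (n : ℤ) := by exact_mod_cast hn
    have h3 : -((b.natAbs : ℤ)) ≤ b := by
      rcases Int.natAbs_eq b with h | h <;> omega
    have h4 : 1 * (n : ℤ) ≤ (a : ℤ) * n := mul_le_mul_of_nonneg_right h1 (by positivity)
    linarith
  have hliminf : liminf f atTop = 0 := by
    have h0le : 0 ≤ liminf f atTop := le_liminf_of_le hbdd.isCoboundedUnder_ge hf0
    have hle : ∀ ε : ℝ, 0 < ε → liminf f atTop ≤ 0 + ε := by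
      intro ε hε
      rw [zero_add]
      refine liminf_le_of_frequently_le ?_ (isBoundedUnder_of_eventually_ge hf0)
      have hapos : (0 : ℝ) < a := by exact_mod_cast ha
      set δ : ℝ := ε * c / (2 * a) with hδd
      have hδ : 0 < δ := by positivity
      obtain ⟨S, hSmem, hSprod⟩ := exists_finset_primes a hδ
      have hv := tendstoLin (a : ℝ) ((b : ℤ) : ℝ) c d hc
      have hvlt : (a : ℝ) / c < 2 * a / c := by
        rw [div_lt_div_iff₀ hc hc]
        nlinarith
      have hvev := hv.eventually_lt_const hvlt
      obtain ⟨n₁, hn₁⟩ := eventually_atTop.mp (hvev.and (hpos.and hposN))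
      rw [frequently_atTop]
      intro M
      obtain ⟨n, hnM, hdvdall⟩ := exists_n_dvd a ha b S hSmem (max M n₁)
      have hn1 : n₁ ≤ n := le_trans (le_max_right _ _) hnM
      obtain ⟨hvn, hcdn, hNn⟩ := hn₁ n hn1
      refine ⟨n, le_trans (le_max_left _ _) hnM, ?_⟩
      set N : ℕ := ((a : ℤ) * n + b).toNat with hN
      have hNz : (N : ℤ) = (a : ℤ) * n + b := Int.toNat_of_nonneg hNn.le
      have hN0 : N ≠ 0 := by
        intro h
        rw [h] at hNz
        omega
      have hsub : S ⊆ N.primeFactors := by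
        intro p hp
        refine Nat.mem_primeFactors.mpr ⟨(hSmem p hp).1, ?_, hN0⟩
        have h := hdvdall p hp
        rw [← hNz] at h
        exact_mod_cast h
      have hkey := totient_le_prod hsub
      have hNr : (N : ℝ) = (a : ℝ) * n + (b : ℝ) := by exact_mod_cast hNz
      show f n ≤ ε
      have hane : (a : ℝ) ≠ 0 := hapos.ne'
      calc f n = (Nat.totient N : ℝ) / (c * n + d) := rfl
        _ ≤ ((N : ℝ) * ∏ p ∈ S, (1 - (p : ℝ)⁻¹)) / (c * n + d) :=
            (div_le_div_iff_of_pos_right hcdn).mpr hkey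
        _ ≤ ((N : ℝ) * δ) / (c * n + d) := by
            exact (div_le_div_iff_of_pos_right hcdn).mpr
              (mul_le_mul_of_nonneg_left hSprod.le (Nat.cast_nonneg N))
        _ = δ * ((N : ℝ) / (c * n + d)) := by ring
        _ ≤ δ * (2 * a / c) := by
            refine mul_le_mul_of_nonneg_left ?_ hδ.le
            rw [hNr]; exact hvn.le
        _ = ε := by
            rw [hδd]
            field_simp
    have h := le_of_forall_pos_add' hle
    linarith
  refine ⟨?_, hliminf⟩
  rw [hlimsup, ← hLeq]
end

section
/- For all integers m ≥ 1 and b, d, r ∈ ℤ with b ≠ d, the set of values φ(n+b)/φ(n+d), where n ranges over positive integers with n > max{-b, -d} and n ≡ r (mod m), is dense in the interval (0, ∞). -/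
open Finset Filter

/-- Weierstrass product inequality. -/
lemma weier (s : Finset ℕ) (f : ℕ → ℝ) (h0 : ∀ i ∈ s, 0 ≤ f i) (h1 : ∀ i ∈ s, f i ≤ 1) :
    1 - ∑ i ∈ s, f i ≤ ∏ i ∈ s, (1 - f i) := by
  classical
  induction s using Finset.induction_on with
  | empty => simp
  | @insert a s ha ih =>
    rw [Finset.sum_insert ha, Finset.prod_insert ha]
    have h0' : ∀ i ∈ s, 0 ≤ f i := fun i hi => h0 i (Finset.mem_insert_of_mem hi)
    have h1' : ∀ i ∈ s, f i ≤ 1 := fun i hi => h1 i (Finset.mem_insert_of_mem hi)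
    have ih' := ih h0' h1'
    have hfa0 := h0 a (Finset.mem_insert_self a s)
    have hfa1 := h1 a (Finset.mem_insert_self a s)
    have hs0 : 0 ≤ ∑ i ∈ s, f i := Finset.sum_nonneg h0'
    nlinarith [ih']

/-- sum of 1/p over primes avoiding a finite set tends to infinity -/
lemma sum_primes_tendsto (F : Finset ℕ) :
    Tendsto (fun x : ℕ => ∑ p ∈ (Finset.range x).filter (fun p => p.Prime ∧ p ∉ F),
      (1 : ℝ) / p) atTop atTop := by
  classical
  set f : ℕ → ℝ := fun p => if p.Prime ∧ p ∉ F then (1:ℝ)/p else 0 with hf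
  have hnonneg : ∀ n, 0 ≤ f n := by
    intro n; simp only [hf]; split <;> positivity
  have hnotsum : ¬ Summable f := by
    intro hsum
    apply not_summable_one_div_on_primes
    have hg : Summable (fun p : ℕ => if p ∈ F ∧ p.Prime then (1:ℝ)/p else 0) := by
      apply summable_of_finite_support
      apply Set.Finite.subset F.finite_toSet
      intro x hx
      simp only [Function.mem_support] at hx
      by_contra hxF
      simp only [Finset.mem_coe] at hxF
      apply hx
      rw [if_neg]; rintro ⟨h1, _⟩; exact hxF h1
    have := hsum.add hg
    apply this.congr
    intro p
    simp only [hf, Set.indicator_apply, Set.mem_setOf_eq]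
    by_cases hp : p.Prime
    · by_cases hpF : p ∈ F <;> simp [hp, hpF]
    · simp [hp]
  have := (not_summable_iff_tendsto_nat_atTop_of_nonneg hnonneg).mp hnotsum
  apply this.congr
  intro n
  rw [Finset.sum_filter]

/-- products of (1 - 1/p) over primes avoiding finite set tend to 0 -/
lemma prod_primes_tendsto_zero (F : Finset ℕ) (h2 : 2 ∈ F) :
    Tendsto (fun x : ℕ => ∏ p ∈ (Finset.range x).filter (fun p => p.Prime ∧ p ∉ F),
      (1 - 1 / (p : ℝ))) atTop (nhds 0) := by
  classical
  have key : ∀ x : ℕ, 0 ≤ (∏ p ∈ (Finset.range x).filter (fun p => p.Prime ∧ p ∉ F),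
      (1 - 1 / (p : ℝ))) ∧ (∏ p ∈ (Finset.range x).filter (fun p => p.Prime ∧ p ∉ F),
      (1 - 1 / (p : ℝ))) ≤ Real.exp (-(∑ p ∈ (Finset.range x).filter (fun p => p.Prime ∧ p ∉ F), (1:ℝ)/p)) := by
    intro x
    have hmem : ∀ p ∈ (Finset.range x).filter (fun p => p.Prime ∧ p ∉ F), 3 ≤ p := by
      intro p hp
      simp only [Finset.mem_filter] at hp
      have h2le := hp.2.1.two_le
      rcases Nat.lt_or_ge p 3 with h3 | h3
      · have : p = 2 := by omega
        subst this
        exact absurd h2 hp.2.2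
      · exact h3
    constructor
    · apply Finset.prod_nonneg
      intro p hp
      have := hmem p hp
      have hp3 : (3:ℝ) ≤ p := by exact_mod_cast this
      have : 1/(p:ℝ) ≤ 1/3 := by
        apply div_le_div_of_nonneg_left <;> linarith
      linarith
    · rw [← Finset.sum_neg_distrib, Real.exp_sum]
      apply Finset.prod_le_prod
      · intro p hp
        have := hmem p hp
        have hp3 : (3:ℝ) ≤ p := by exact_mod_cast this
        have : 1/(p:ℝ) ≤ 1/3 := by apply div_le_div_of_nonneg_left <;> linarith
        linarith
      · intro p hp
        have := Real.add_one_le_exp (-(1/(p:ℝ)))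
        linarith
  have hexp : Tendsto (fun x : ℕ => Real.exp (-(∑ p ∈ (Finset.range x).filter (fun p => p.Prime ∧ p ∉ F), (1:ℝ)/p))) atTop (nhds 0) := by
    apply Real.tendsto_exp_atBot.comp
    exact tendsto_neg_atTop_atBot.comp (sum_primes_tendsto F)
  apply squeeze_zero (fun x => (key x).1) (fun x => (key x).2) hexp
open Finset Filter

open scoped Classical in
noncomputable def gr (F : Finset ℕ) (u : ℝ) (N₀ : ℕ) : ℕ → Finset ℕ
  | 0 => ∅
  | (j+1) =>
      if (j.Prime ∧ j ∉ F ∧ N₀ ≤ j ∧ u ≤ (∏ p ∈ gr F u N₀ j, (1 - 1/(p:ℝ))) * (1 - 1/(j:ℝ)))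
      then insert j (gr F u N₀ j) else gr F u N₀ j

lemma gr_mem (F : Finset ℕ) (u : ℝ) (N₀ : ℕ) (j : ℕ) :
    ∀ p ∈ gr F u N₀ j, p.Prime ∧ p ∉ F ∧ N₀ ≤ p ∧ p < j := by
  induction j with
  | zero => simp [gr]
  | succ j ih =>
    intro p hp
    rw [gr] at hp
    split at hp
    · rename_i h
      rcases Finset.mem_insert.mp hp with rfl | hp
      · exact ⟨h.1, h.2.1, h.2.2.1, Nat.lt_succ_self _⟩
      · have := ih p hp; exact ⟨this.1, this.2.1, this.2.2.1, this.2.2.2.trans (Nat.lt_succ_self _)⟩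
    · have := ih p hp; exact ⟨this.1, this.2.1, this.2.2.1, this.2.2.2.trans (Nat.lt_succ_self _)⟩

lemma gr_ge (F : Finset ℕ) (u : ℝ) (N₀ : ℕ) (hu1 : u ≤ 1) (j : ℕ) :
    u ≤ ∏ p ∈ gr F u N₀ j, (1 - 1/(p:ℝ)) := by
  induction j with
  | zero => simpa [gr] using hu1
  | succ j ih =>
    rw [gr]
    split
    · rename_i h
      have hj : j ∉ gr F u N₀ j := fun hj => absurd (gr_mem F u N₀ j j hj).2.2.2 (lt_irrefl j)
      rw [Finset.prod_insert hj, mul_comm]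
      exact h.2.2.2
    · exact ih

lemma greedy (F : Finset ℕ) (u ε : ℝ) (hu : 0 < u) (hu1 : u ≤ 1) (hε : 0 < ε) :
    ∃ S : Finset ℕ, (∀ p ∈ S, p.Prime ∧ p ∉ F) ∧
      u ≤ ∏ p ∈ S, (1 - 1/(p:ℝ)) ∧ ∏ p ∈ S, (1 - 1/(p:ℝ)) < u + ε := by
  classical
  set N₀ : ℕ := max 3 ⌈1/ε⌉₊ with hN₀
  -- there is a skip step
  by_cases hskip : ∃ j : ℕ, (j.Prime ∧ j ∉ F ∧ N₀ ≤ j) ∧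
      (∏ p ∈ gr F u N₀ j, (1 - 1/(p:ℝ))) * (1 - 1/(j:ℝ)) < u
  · obtain ⟨j, hj, hlt⟩ := hskip
    refine ⟨gr F u N₀ j, fun p hp => ⟨(gr_mem F u N₀ j p hp).1, (gr_mem F u N₀ j p hp).2.1⟩,
      gr_ge F u N₀ hu1 j, ?_⟩
    set P := ∏ p ∈ gr F u N₀ j, (1 - 1/(p:ℝ)) with hP
    have hPle1 : P ≤ 1 := by
      apply Finset.prod_le_one
      · intro p hp
        have h3 : 3 ≤ p := le_trans (le_max_left _ _) (gr_mem F u N₀ j p hp).2.2.1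
        have : (3:ℝ) ≤ p := by exact_mod_cast h3
        have : 1/(p:ℝ) ≤ 1/3 := by apply div_le_div_of_nonneg_left <;> linarith
        linarith
      · intro p hp
        have h2 : (2:ℝ) ≤ p := by exact_mod_cast (gr_mem F u N₀ j p hp).1.two_le
        have : 0 ≤ 1/(p:ℝ) := by positivity
        linarith
    have hj3 : 3 ≤ j := le_trans (le_max_left _ _) hj.2.2
    have hjR : (3:ℝ) ≤ (j:ℝ) := by exact_mod_cast hj3
    have hinvj : 1/(j:ℝ) ≤ ε := by
      have h1 : (⌈1/ε⌉₊ : ℝ) ≤ j := by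
        exact_mod_cast le_trans (le_max_right 3 _) hj.2.2
      have h2 : 1/ε ≤ (j:ℝ) := le_trans (Nat.le_ceil _) h1
      rw [div_le_iff₀ (by linarith)]
      rw [div_le_iff₀ hε] at h2
      linarith [mul_comm ε (j:ℝ)]
    have hP0 : 0 ≤ P := le_trans (le_of_lt hu) (gr_ge F u N₀ hu1 j)
    -- P * (1 - 1/j) < u  →  P < u + P/j ≤ u + ε
    have : P - P * (1/(j:ℝ)) < u := by nlinarith [hlt]
    have hPj : P * (1/(j:ℝ)) ≤ ε := by
      calc P * (1/(j:ℝ)) ≤ 1 * (1/(j:ℝ)) := by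
            apply mul_le_mul_of_nonneg_right hPle1; positivity
        _ = 1/(j:ℝ) := one_mul _
        _ ≤ ε := hinvj
    linarith
  · -- no skip: gr equals full filter, contradiction with tendsto 0
    exfalso
    push_neg at hskip
    set F₂ : Finset ℕ := F ∪ Finset.range N₀ with hF₂
    have h2F₂ : 2 ∈ F₂ := by
      rw [hF₂, Finset.mem_union, Finset.mem_range]
      right
      have : 3 ≤ N₀ := le_max_left _ _
      omega
    have hgr_eq : ∀ x, gr F u N₀ x = (Finset.range x).filter (fun p => p.Prime ∧ p ∉ F₂) := by
      intro x
      induction x with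
      | zero => simp [gr]
      | succ x ih =>
        rw [gr, Finset.range_add_one, Finset.filter_insert]
        by_cases hx : x.Prime ∧ x ∉ F₂
        · have hx' : x.Prime ∧ x ∉ F ∧ N₀ ≤ x := by
            refine ⟨hx.1, ?_, ?_⟩
            · intro hxF; exact hx.2 (Finset.mem_union_left _ hxF)
            · by_contra hlt
              exact hx.2 (Finset.mem_union_right _ (Finset.mem_range.mpr (by omega)))
          have hge := hskip x
          rw [if_pos ⟨hx'.1, hx'.2.1, hx'.2.2, hge ⟨hx'.1, hx'.2.1, hx'.2.2⟩⟩, if_pos hx, ih]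
        · rw [if_neg, if_neg hx, ih]
          rintro ⟨hp, hnF, hN, _⟩
          exact hx ⟨hp, fun hmem => by
            rcases Finset.mem_union.mp hmem with h | h
            · exact hnF h
            · exact absurd hN (not_le.mpr (Finset.mem_range.mp h))⟩
    have htend := prod_primes_tendsto_zero F₂ h2F₂
    have hev : ∀ᶠ x : ℕ in atTop, (∏ p ∈ (Finset.range x).filter (fun p => p.Prime ∧ p ∉ F₂),
        (1 - 1/(p:ℝ))) < u := htend.eventually_lt_const hu
    obtain ⟨x, hx⟩ := hev.exists
    rw [← hgr_eq] at hx
    exact absurd (gr_ge F u N₀ hu1 x) (not_le.mpr hx)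
lemma ratio_dense (F : Finset ℕ) (τ ε : ℝ) (hτ : 0 < τ) (hε : 0 < ε) :
    ∃ S T : Finset ℕ, Disjoint S T ∧ (∀ p ∈ S, p.Prime ∧ p ∉ F) ∧ (∀ p ∈ T, p.Prime ∧ p ∉ F) ∧
      0 < (∏ p ∈ T, (1 - 1/(p:ℝ))) ∧ 0 < (∏ p ∈ S, (1 - 1/(p:ℝ))) ∧
      |(∏ p ∈ S, (1 - 1/(p:ℝ))) / (∏ p ∈ T, (1 - 1/(p:ℝ))) - τ| < ε := by
  classical
  set u : ℝ := min (1/2) (1/(2*τ)) with hu_def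
  have hu0 : 0 < u := lt_min (by norm_num) (by positivity)
  have hu1 : u ≤ 1 := le_trans (min_le_left _ _) (by norm_num)
  obtain ⟨T, hTmem, hTlo, hThi⟩ := greedy F u u hu0 hu1 hu0
  set PT := ∏ p ∈ T, (1 - 1/(p:ℝ)) with hPT
  have hPT0 : 0 < PT := lt_of_lt_of_le hu0 hTlo
  have hPT_le : τ * PT ≤ 1 := by
    have h2u : 2*u ≤ 1/τ := by
      have : u ≤ 1/(2*τ) := min_le_right _ _
      calc 2*u ≤ 2*(1/(2*τ)) := by linarith
        _ = 1/τ := by field_simp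
    have : PT < 1/τ := lt_of_lt_of_le hThi (by linarith)
    calc τ * PT ≤ τ * (1/τ) := by nlinarith
      _ = 1 := by field_simp
  have huS0 : 0 < τ * PT := by positivity
  obtain ⟨S, hSmem, hSlo, hShi⟩ := greedy (F ∪ T) (τ * PT) (ε * PT) huS0 hPT_le (by positivity)
  set PS := ∏ p ∈ S, (1 - 1/(p:ℝ)) with hPS
  refine ⟨S, T, ?_, ?_, hTmem, hPT0, lt_of_lt_of_le huS0 hSlo, ?_⟩
  · rw [Finset.disjoint_left]
    intro a haS haT
    exact (hSmem a haS).2 (Finset.mem_union_right _ haT)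
  · intro p hp
    refine ⟨(hSmem p hp).1, fun hpF => (hSmem p hp).2 (Finset.mem_union_left _ hpF)⟩
  · rw [abs_lt]
    constructor
    · have : τ ≤ PS / PT := by
        rw [le_div_iff₀ hPT0]
        linarith [hSlo]
      linarith
    · have : PS / PT < τ + ε := by
        rw [div_lt_iff₀ hPT0]
        calc PS < τ * PT + ε * PT := hShi
          _ = (τ + ε) * PT := by ring
      linarith
lemma totient_real (N : ℕ) :
    (N.totient : ℝ) = N * ∏ p ∈ N.primeFactors, (1 - 1/(p:ℝ)) := by
  have h := Nat.totient_eq_mul_prod_factors N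
  apply_fun (fun q : ℚ => (q : ℝ)) at h
  push_cast at h
  rw [h]
  congr 1
  apply Finset.prod_congr rfl
  intro p _
  rw [one_div]

lemma exists_residue (p : ℕ) (hp : p.Prime) (b d : ℤ) (h : 3 ≤ p ∨ (p:ℤ) ∣ (b - d)) :
    ∃ c : ℕ, ¬ (p:ℤ) ∣ ((c:ℤ) + b) ∧ ¬ (p:ℤ) ∣ ((c:ℤ) + d) := by
  classical
  haveI : Fact p.Prime := ⟨hp⟩
  have hcard : Fintype.card (ZMod p) = p := ZMod.card p
  set x : ZMod p := ((-b : ℤ) : ZMod p) with hx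
  set y : ZMod p := ((-d : ℤ) : ZMod p) with hy
  have hex : ∃ z : ZMod p, z ≠ x ∧ z ≠ y := by
    rcases h with h3 | hdvd
    · have hc2 : ({x, y} : Finset (ZMod p)).card ≤ 2 :=
        (Finset.card_insert_le _ _).trans (by simp)
      have hpos : 0 < ({x, y} : Finset (ZMod p))ᶜ.card := by
        rw [Finset.card_compl, hcard]
        omega
      obtain ⟨z, hz⟩ := Finset.card_pos.mp hpos
      rw [Finset.mem_compl] at hz
      refine ⟨z, ?_, ?_⟩ <;> intro hzz <;> apply hz <;> simp [hzz]
    · have hxy : x = y := by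
        rw [hx, hy]
        have : ((b - d : ℤ) : ZMod p) = 0 := by
          rw [ZMod.intCast_zmod_eq_zero_iff_dvd]; exact_mod_cast hdvd
        push_cast at this ⊢
        linear_combination -this
      obtain ⟨z, hz⟩ := Fintype.exists_ne_of_one_lt_card (by rw [hcard]; exact hp.one_lt) x
      exact ⟨z, hz, hxy ▸ hz⟩
  obtain ⟨z, hzx, hzy⟩ := hex
  have hzval : ((z.val : ℕ) : ZMod p) = z := by rw [ZMod.natCast_val, ZMod.cast_id]
  refine ⟨z.val, ?_, ?_⟩
  · rw [← ZMod.intCast_zmod_eq_zero_iff_dvd]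
    push_cast
    rw [hzval]
    intro hcon
    apply hzx
    rw [hx]
    push_cast
    linear_combination hcon
  · rw [← ZMod.intCast_zmod_eq_zero_iff_dvd]
    push_cast
    rw [hzval]
    intro hcon
    apply hzy
    rw [hy]
    push_cast
    linear_combination hcon
lemma dvd_iff_of_modeq {p a c : ℤ} (h : a ≡ c [ZMOD p]) : p ∣ a ↔ p ∣ c := by
  constructor <;> intro hh
  · have h1 : p ∣ c - a := h.dvd
    have : c = (c - a) + a := by ring
    rw [this]; exact dvd_add h1 hh
  · have h1 : p ∣ a - c := h.symm.dvd
    have : a = (a - c) + c := by ring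
    rw [this]; exact dvd_add h1 hh

lemma prod_one_sub_pos (s : Finset ℕ) (h : ∀ p ∈ s, 2 ≤ p) :
    0 < ∏ p ∈ s, (1 - 1/(p:ℝ)) := by
  apply Finset.prod_pos
  intro p hp
  have h2 : (2:ℝ) ≤ p := by exact_mod_cast h p hp
  have : 1/(p:ℝ) ≤ 1/2 := by apply div_le_div_of_nonneg_left <;> linarith
  linarith

lemma prod_one_sub_le_one (s : Finset ℕ) (h : ∀ p ∈ s, 2 ≤ p) :
    ∏ p ∈ s, (1 - 1/(p:ℝ)) ≤ 1 := by
  apply Finset.prod_le_one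
  · intro p hp
    have h2 : (2:ℝ) ≤ p := by exact_mod_cast h p hp
    have : 1/(p:ℝ) ≤ 1/2 := by apply div_le_div_of_nonneg_left <;> linarith
    linarith
  · intro p hp
    have h2 : (2:ℝ) ≤ p := by exact_mod_cast h p hp
    have : 0 ≤ 1/(p:ℝ) := by positivity
    linarith

lemma exists_y (c1 c2 δ : ℝ) (hc1 : 0 ≤ c1) (hc2 : 0 ≤ c2) (hδ : 0 < δ) (y0 : ℕ) :
    ∃ y : ℕ, y0 ≤ y ∧ c1 + c2 * y ≤ δ * (y+1) * Real.log (y+1) := by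
  refine ⟨max y0 ⌈Real.exp ((c1+c2)/δ)⌉₊, le_max_left _ _, ?_⟩
  set y : ℕ := max y0 ⌈Real.exp ((c1+c2)/δ)⌉₊ with hy
  have hexp : Real.exp ((c1+c2)/δ) ≤ ((y:ℝ)+1) := by
    have h1 : Real.exp ((c1+c2)/δ) ≤ (⌈Real.exp ((c1+c2)/δ)⌉₊ : ℝ) := Nat.le_ceil _
    have h2 : (⌈Real.exp ((c1+c2)/δ)⌉₊ : ℝ) ≤ (y:ℝ) := by
      exact_mod_cast le_max_right y0 _
    linarith
  have hlog : (c1+c2)/δ ≤ Real.log ((y:ℝ)+1) := by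
    rw [Real.le_log_iff_exp_le (by positivity)]
    exact hexp
  have hyn : (0:ℝ) ≤ (y:ℝ) := Nat.cast_nonneg y
  have key : δ * ((y:ℝ)+1) * ((c1+c2)/δ) ≤ δ * ((y:ℝ)+1) * Real.log ((y:ℝ)+1) := by
    apply mul_le_mul_of_nonneg_left hlog
    positivity
  have : δ * ((y:ℝ)+1) * ((c1+c2)/δ) = ((y:ℝ)+1) * (c1+c2) := by
    field_simp
  rw [this] at key
  nlinarith

lemma log_chain (N C M mm yy : ℕ) (h1 : 1 ≤ N) (hN : N ≤ C * M^2) (hM : M ≤ mm * 4^yy)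
    (hC : 1 ≤ C) (hmm : 1 ≤ mm) (hM1 : 1 ≤ M) :
    Real.log N ≤ Real.log C + 2*Real.log mm + 2*yy*Real.log 4 := by
  have hMr : (1:ℝ) ≤ (M:ℝ) := by exact_mod_cast hM1
  have hCr : (1:ℝ) ≤ (C:ℝ) := by exact_mod_cast hC
  have hmr : (1:ℝ) ≤ (mm:ℝ) := by exact_mod_cast hmm
  have step1 : Real.log N ≤ Real.log ((C:ℝ) * (M:ℝ)^2) := by
    apply Real.log_le_log (by exact_mod_cast h1)
    exact_mod_cast hN
  have step2 : Real.log ((C:ℝ) * (M:ℝ)^2) = Real.log C + 2 * Real.log M := by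
    rw [Real.log_mul (by linarith) (by positivity), Real.log_pow]
    push_cast; ring
  have step3 : Real.log (M:ℝ) ≤ Real.log mm + yy * Real.log 4 := by
    have : Real.log (M:ℝ) ≤ Real.log ((mm:ℝ) * 4^yy) := by
      apply Real.log_le_log (by linarith)
      exact_mod_cast hM
    rw [Real.log_mul (by linarith) (by positivity), Real.log_pow] at this
    linarith
  linarith

lemma E_bound (N yy : ℕ) (U : Finset ℕ) (δ : ℝ) (hδ : 0 < δ)
    (hU : U ⊆ N.primeFactors) (hUy : ∀ p ∈ U, yy+1 ≤ p) (hN1 : 1 ≤ N) (h2y : 2 ≤ yy)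
    (hlog : Real.log N ≤ δ * (yy+1) * Real.log (yy+1)) :
    1 - δ ≤ ∏ p ∈ U, (1 - 1/(p:ℝ)) ∧ (∏ p ∈ U, (1 - 1/(p:ℝ))) ≤ 1 := by
  have hU2 : ∀ p ∈ U, 2 ≤ p := fun p hp => le_trans (by omega) (hUy p hp)
  refine ⟨?_, prod_one_sub_le_one U hU2⟩
  -- card bound
  have hdvd : ∏ p ∈ U, p ∣ N :=
    dvd_trans (Finset.prod_dvd_prod_of_subset U N.primeFactors id hU) (Nat.prod_primeFactors_dvd N)
  have hpowN : (yy+1)^U.card ≤ N := by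
    calc (yy+1)^U.card ≤ ∏ p ∈ U, p := Finset.pow_card_le_prod U _ _ hUy
      _ ≤ N := Nat.le_of_dvd (by omega) hdvd
  have hlogy_pos : 0 < Real.log ((yy:ℝ)+1) := by
    apply Real.log_pos
    have : (2:ℝ) ≤ (yy:ℝ) := by exact_mod_cast h2y
    linarith
  have hcard : (U.card : ℝ) ≤ δ * ((yy:ℝ)+1) := by
    have h1 : (U.card : ℝ) * Real.log ((yy:ℝ)+1) ≤ Real.log N := by
      have : Real.log (((yy:ℝ)+1)^U.card) ≤ Real.log N := by
        apply Real.log_le_log (by positivity)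
        exact_mod_cast hpowN
      rwa [Real.log_pow] at this
    have h2 : (U.card : ℝ) * Real.log ((yy:ℝ)+1) ≤ δ * ((yy:ℝ)+1) * Real.log ((yy:ℝ)+1) :=
      le_trans h1 hlog
    exact le_of_mul_le_mul_right h2 hlogy_pos
  -- sum bound
  have hsum : ∑ p ∈ U, 1/(p:ℝ) ≤ δ := by
    have h1 : ∑ p ∈ U, 1/(p:ℝ) ≤ U.card * (1/((yy:ℝ)+1)) := by
      rw [← nsmul_eq_mul]
      apply Finset.sum_le_card_nsmul
      intro p hp
      have hpy : ((yy:ℝ)+1) ≤ p := by exact_mod_cast hUy p hp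
      apply div_le_div_of_nonneg_left <;> [skip; positivity; skip] <;> linarith
    have h2 : (U.card : ℝ) * (1/((yy:ℝ)+1)) ≤ δ := by
      rw [mul_one_div, div_le_iff₀ (by positivity)]
      linarith [hcard]
    linarith
  have hweier := weier U (fun p => 1/(p:ℝ)) ?_ ?_
  · linarith
  · intro p hp; positivity
  · intro p hp
    have : (2:ℝ) ≤ p := by exact_mod_cast hU2 p hp
    rw [div_le_one (by linarith)]
    linarith
set_option maxHeartbeats 1600000 in
theorem dense_totient_quotient_shift (m : ℕ) (hm : 0 < m) (b d r : ℤ) (hbd : b ≠ d) :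
    Set.Ioi (0 : ℝ) ⊆
      closure {y : ℝ | ∃ n : ℕ, 0 < n ∧ 0 < (n : ℤ) + b ∧ 0 < (n : ℤ) + d ∧
        (n : ℤ) ≡ r [ZMOD (m : ℤ)] ∧
        y = (Nat.totient ((n : ℤ) + b).toNat : ℝ) / (Nat.totient ((n : ℤ) + d).toNat : ℝ)} := by
  classical
  intro t ht
  rw [Set.mem_Ioi] at ht
  rw [Metric.mem_closure_iff]
  intro εtop hεtop
  -- ## small parameters
  set α : ℝ := min (1/2) (εtop / (7*(t+1))) with hα_def
  have hα0 : 0 < α := lt_min (by norm_num) (by positivity)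
  have hα12 : α ≤ 1/2 := min_le_left _ _
  have hαε : 7 * t * α < εtop := by
    have h1 : α ≤ εtop/(7*(t+1)) := min_le_right _ _
    have h2 : 7*t*α ≤ 7*t*(εtop/(7*(t+1))) := by
      have := mul_le_mul_of_nonneg_left h1 (show (0:ℝ) ≤ 7*t by positivity)
      linarith
    have h3 : 7*t/(7*(t+1)) < 1 := by rw [div_lt_one (by positivity)]; linarith
    have h4 : 7*t*(εtop/(7*(t+1))) < εtop := by
      calc 7*t*(εtop/(7*(t+1))) = εtop * (7*t/(7*(t+1))) := by ring
        _ < εtop * 1 := mul_lt_mul_of_pos_left h3 hεtop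
        _ = εtop := mul_one _
    linarith
  set δ : ℝ := α/2 with hδ_def
  have hδ0 : 0 < δ := by positivity
  -- ## fixed finite data
  have hmne0 : m ≠ 0 := hm.ne'
  have hmZ : ((m:ℤ)) ≠ 0 := by exact_mod_cast hmne0
  set B : ℕ := b.natAbs + d.natAbs with hB_def
  have hbB : |b| ≤ (B:ℤ) := by
    rw [Int.abs_eq_natAbs, hB_def]; push_cast; linarith [abs_nonneg d]
  have hdB : |d| ≤ (B:ℤ) := by
    rw [Int.abs_eq_natAbs, hB_def]; push_cast; linarith [abs_nonneg b]
  set Ab0 : Finset ℕ := m.primeFactors.filter (fun p => (p:ℤ) ∣ (r + b)) with hAb0_def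
  set Ad0' : Finset ℕ := m.primeFactors.filter (fun p => (p:ℤ) ∣ (r + d)) with hAd0'_def
  set two? : Prop := ¬(2 ∣ m) ∧ ¬((2:ℤ) ∣ (b - d)) with htwo_def
  set Ad0 : Finset ℕ := if two? then insert 2 Ad0' else Ad0' with hAd0_def
  have hAb0_sub : Ab0 ⊆ m.primeFactors := Finset.filter_subset _ _
  have hAd0'_sub : Ad0' ⊆ m.primeFactors := Finset.filter_subset _ _
  have hAb0_2 : ∀ p ∈ Ab0, 2 ≤ p := fun p hp =>
    (Nat.prime_of_mem_primeFactors (hAb0_sub hp)).two_le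
  have hAd0_2 : ∀ p ∈ Ad0, 2 ≤ p := by
    intro p hp
    rw [hAd0_def] at hp
    split at hp
    · rcases Finset.mem_insert.mp hp with rfl | hp'
      · omega
      · exact (Nat.prime_of_mem_primeFactors (hAd0'_sub hp')).two_le
    · exact (Nat.prime_of_mem_primeFactors (hAd0'_sub hp)).two_le
  set cb0 : ℝ := ∏ p ∈ Ab0, (1-1/(p:ℝ)) with hcb0_def
  set cd0 : ℝ := ∏ p ∈ Ad0, (1-1/(p:ℝ)) with hcd0_def
  have hcb0_pos : 0 < cb0 := prod_one_sub_pos Ab0 hAb0_2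
  have hcd0_pos : 0 < cd0 := prod_one_sub_pos Ad0 hAd0_2
  set τ : ℝ := t * cd0 / cb0 with hτ_def
  have hτ0 : 0 < τ := by rw [hτ_def]; positivity
  set F : Finset ℕ := (m.primeFactors ∪ (b-d).natAbs.primeFactors) ∪ {2} with hF_def
  have hF2 : 2 ∈ F := by rw [hF_def]; simp
  have hFm : m.primeFactors ⊆ F := fun p hp =>
    Finset.mem_union_left _ (Finset.mem_union_left _ hp)
  have hFbd : (b-d).natAbs.primeFactors ⊆ F := fun p hp =>
    Finset.mem_union_left _ (Finset.mem_union_right _ hp)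
  obtain ⟨S, T, hST, hSmem, hTmem, hPT0, hPS0, hρ⟩ := ratio_dense F τ (α*τ) hτ0 (by positivity)
  set PSv : ℝ := ∏ p ∈ S, (1-1/(p:ℝ)) with hPSv_def
  set PTv : ℝ := ∏ p ∈ T, (1-1/(p:ℝ)) with hPTv_def
  -- ## W, C and the cutoff Y
  set W : ℕ := B + ⌈(B:ℝ)/α⌉₊ + 2 with hW_def
  set C : ℕ := W + 1 + B with hC_def
  have hC1 : 1 ≤ C := by omega
  obtain ⟨Y, hY_ge, hY_log⟩ := exists_y (Real.log C + 2*Real.log m) (2*Real.log 4) δ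
    (by
      have h1 : (0:ℝ) ≤ Real.log C := Real.log_nonneg (by exact_mod_cast hC1)
      have h2 : (0:ℝ) ≤ Real.log m := Real.log_nonneg (by exact_mod_cast hm)
      linarith)
    (by positivity) hδ0 (max 2 ((S ∪ T).sup id))
  have hY2 : 2 ≤ Y := le_trans (le_max_left _ _) hY_ge
  have hyS : ∀ p ∈ S, p ≤ Y := fun p hp =>
    le_trans (le_trans (Finset.le_sup (f := id) (Finset.mem_union_left _ hp))
      (le_max_right 2 _)) hY_ge
  have hyT : ∀ p ∈ T, p ≤ Y := fun p hp =>
    le_trans (le_trans (Finset.le_sup (f := id) (Finset.mem_union_right _ hp))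
      (le_max_right 2 _)) hY_ge
  -- ## CRT setup
  set Q : Finset ℕ := (Finset.range (Y+1)).filter (fun p => p.Prime ∧ ¬ p ∣ m) with hQ_def
  set tset : Finset ℕ := insert m Q with htset_def
  have hQ_prime : ∀ p ∈ Q, p.Prime ∧ ¬ p ∣ m := fun p hp => (Finset.mem_filter.mp hp).2
  have hQ_mem_iff : ∀ p : ℕ, p.Prime → ¬ p ∣ m → p ≤ Y → p ∈ Q := by
    intro p h1 h2 h3
    rw [hQ_def]
    exact Finset.mem_filter.mpr ⟨Finset.mem_range.mpr (by omega), h1, h2⟩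
  have hQ_le : ∀ p ∈ Q, p ≤ Y := by
    intro p hp
    rw [hQ_def, Finset.mem_filter, Finset.mem_range] at hp
    omega
  have hm_notQ : m ∉ Q := fun h => (hQ_prime m h).2 dvd_rfl
  have hts_ne : ∀ i ∈ tset, id i ≠ 0 := by
    intro i hi
    rcases Finset.mem_insert.mp hi with rfl | hi'
    · exact hmne0
    · exact (hQ_prime i hi').1.pos.ne'
  have hts_pair : (↑tset : Set ℕ).Pairwise (Function.onFun Nat.Coprime id) := by
    intro i hi j hj hij
    simp only [htset_def, Finset.coe_insert, Set.mem_insert_iff, Finset.mem_coe] at hi hj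
    show Nat.Coprime i j
    rcases hi with rfl | hiQ
    · rcases hj with rfl | hjQ
      · exact absurd rfl hij
      · exact (((hQ_prime j hjQ).1.coprime_iff_not_dvd).mpr (hQ_prime j hjQ).2).symm
    · rcases hj with rfl | hjQ
      · exact ((hQ_prime i hiQ).1.coprime_iff_not_dvd).mpr (hQ_prime i hiQ).2
      · exact (Nat.coprime_primes (hQ_prime i hiQ).1 (hQ_prime j hjQ).1).mpr hij
  -- residue functions
  set avoidRes : ℕ → ℕ := fun p =>
    if h : p.Prime ∧ (3 ≤ p ∨ (p:ℤ) ∣ (b-d)) then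
      Classical.choose (exists_residue p h.1 b d h.2) else 0 with havoidRes_def
  set aRes : ℕ → ℕ := fun p =>
    if p = m then (r % m).toNat
    else if p ∈ S then ((-b) % p).toNat
    else if p ∈ T then ((-d) % p).toNat
    else if p = 2 ∧ two? then ((-d) % 2).toNat
    else avoidRes p with haRes_def
  set kk := Nat.chineseRemainderOfFinset aRes id tset hts_ne hts_pair with hkk_def
  have hklt : (kk : ℕ) < ∏ i ∈ tset, id i :=
    Nat.chineseRemainderOfFinset_lt_prod aRes id hts_ne hts_pair
  set M : ℕ := ∏ i ∈ tset, i with hM_def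
  have hM1 : 1 ≤ M := by
    rw [hM_def]
    apply Nat.one_le_iff_ne_zero.mpr
    apply Finset.prod_ne_zero_iff.mpr
    exact hts_ne
  have hklt' : (kk : ℕ) < M := hklt
  set n : ℕ := (kk : ℕ) + M * (M * W) with hn_def
  have hcong : ∀ i ∈ tset, n ≡ aRes i [MOD i] := by
    intro i hi
    have h1 : (kk:ℕ) ≡ n [MOD i] := by
      apply (Nat.modEq_iff_dvd' (by rw [hn_def]; omega)).mpr
      have h2 : n - (kk:ℕ) = M * (M*W) := by rw [hn_def]; omega
      rw [h2, hM_def]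
      exact Dvd.dvd.mul_right (Finset.dvd_prod_of_mem _ hi) _
    exact h1.symm.trans (kk.2 i hi)
  have hcongZ : ∀ i ∈ tset, (n:ℤ) ≡ (aRes i : ℤ) [ZMOD (i:ℤ)] :=
    fun i hi => Int.natCast_modEq_iff.mpr (hcong i hi)
  -- ## basic size facts
  have hW2 : 2 ≤ W := by rw [hW_def]; omega
  have hMM : 1 ≤ M * M := by
    have := Nat.mul_le_mul hM1 hM1
    simpa using this
  have hW_le_n : W ≤ n := by
    have h1 : W ≤ M * (M * W) := by
      have h2 := Nat.mul_le_mul hM1 (Nat.mul_le_mul hM1 (le_refl W))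
      simpa using h2
    rw [hn_def]; omega
  have hn_ub : n ≤ M*M*(W+1) := by
    have h1 : n ≤ M + M*(M*W) := by rw [hn_def]; omega
    have hMle2 : M ≤ M*M := by
      have := Nat.mul_le_mul hM1 (le_refl M)
      simpa using this
    have e1 : M*M*(W+1) = M*M*W + M*M := by ring
    have e2 : M*(M*W) = M*M*W := by ring
    omega
  have hWB : (B:ℤ) + 2 ≤ (W:ℤ) := by
    rw [hW_def]; push_cast; omega
  have hnW : (W:ℤ) ≤ (n:ℤ) := by exact_mod_cast hW_le_n
  have hNb_pos : 0 < (n:ℤ) + b := by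
    have := neg_abs_le b
    linarith
  have hNd_pos : 0 < (n:ℤ) + d := by
    have := neg_abs_le d
    linarith
  set Nb : ℕ := ((n:ℤ)+b).toNat with hNb_def
  set Nd : ℕ := ((n:ℤ)+d).toNat with hNd_def
  have hNb_cast : (Nb:ℤ) = (n:ℤ) + b := Int.toNat_of_nonneg hNb_pos.le
  have hNd_cast : (Nd:ℤ) = (n:ℤ) + d := Int.toNat_of_nonneg hNd_pos.le
  have hNb1 : 1 ≤ Nb := by
    have h1 : (0:ℤ) < (Nb:ℤ) := by rw [hNb_cast]; exact hNb_pos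
    exact_mod_cast h1
  have hNd1 : 1 ≤ Nd := by
    have h1 : (0:ℤ) < (Nd:ℤ) := by rw [hNd_cast]; exact hNd_pos
    exact_mod_cast h1
  have hNb_ub : Nb ≤ C * M^2 := by
    have h1 : (Nb:ℤ) ≤ (n:ℤ) + B := by
      rw [hNb_cast]
      have := le_abs_self b
      linarith
    have h2 : Nb ≤ n + B := by exact_mod_cast h1
    have h3 : n + B ≤ M*M*(W+1) + B := by omega
    have h4 : B ≤ M*M*B := by
      have := Nat.mul_le_mul hMM (le_refl B)
      simpa using this
    have h5 : M*M*(W+1) + M*M*B = C * M^2 := by rw [hC_def]; ring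
    omega
  have hNd_ub : Nd ≤ C * M^2 := by
    have h1 : (Nd:ℤ) ≤ (n:ℤ) + B := by
      rw [hNd_cast]
      have := le_abs_self d
      linarith
    have h2 : Nd ≤ n + B := by exact_mod_cast h1
    have h3 : n + B ≤ M*M*(W+1) + B := by omega
    have h4 : B ≤ M*M*B := by
      have := Nat.mul_le_mul hMM (le_refl B)
      simpa using this
    have h5 : M*M*(W+1) + M*M*B = C * M^2 := by rw [hC_def]; ring
    omega
  have hMle : M ≤ m * 4^Y := by
    have hsplit : M = m * ∏ p ∈ Q, p := by
      rw [hM_def, htset_def, Finset.prod_insert hm_notQ]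
    have h1 : ∏ p ∈ Q, p ≤ primorial Y := by
      rw [primorial]
      apply Finset.prod_le_prod_of_subset_of_one_le'
      · intro p hp
        rw [hQ_def, Finset.mem_filter] at hp
        rw [Finset.mem_filter]
        exact ⟨hp.1, hp.2.1⟩
      · intro p hp _
        exact (Finset.mem_filter.mp hp).2.pos
    calc M = m * ∏ p ∈ Q, p := hsplit
      _ ≤ m * primorial Y := Nat.mul_le_mul_left m h1
      _ ≤ m * 4^Y := Nat.mul_le_mul_left m (primorial_le_4_pow Y)
  -- ## congruence consequences
  have hm_tset : m ∈ tset := Finset.mem_insert_self _ _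
  have hQ_tset : ∀ p ∈ Q, p ∈ tset := fun p hp => Finset.mem_insert_of_mem hp
  have hQ_ne_m : ∀ p ∈ Q, p ≠ m := fun p hp h => (hQ_prime p hp).2 (h ▸ dvd_rfl)
  have hmodr : (n:ℤ) ≡ r [ZMOD (m:ℤ)] := by
    have h1 := hcongZ m hm_tset
    have h2 : aRes m = (r % (m:ℤ)).toNat := by rw [haRes_def]; exact if_pos rfl
    rw [h2, Int.toNat_of_nonneg (Int.emod_nonneg r hmZ)] at h1
    exact h1.trans (Int.emod_emod_of_dvd r dvd_rfl)
  have dvd_of_res : ∀ (p : ℕ) (x : ℤ), p ∈ tset → aRes p = (x % p).toNat → 0 < p →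
      ((p:ℕ):ℤ) ∣ ((n:ℤ) - x) := by
    intro p x hp hres hppos
    have h1 := hcongZ p hp
    have hpz : ((p:ℕ):ℤ) ≠ 0 := by exact_mod_cast hppos.ne'
    rw [hres, Int.toNat_of_nonneg (Int.emod_nonneg x hpz)] at h1
    have h2 : (n:ℤ) ≡ x [ZMOD ((p:ℕ):ℤ)] := h1.trans (Int.emod_emod_of_dvd x dvd_rfl)
    exact h2.symm.dvd
  have hS_notm : ∀ p ∈ S, ¬ p ∣ m := by
    intro p hp hdvd
    exact (hSmem p hp).2 (hFm (Nat.mem_primeFactors.mpr ⟨(hSmem p hp).1, hdvd, hmne0⟩))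
  have hT_notm : ∀ p ∈ T, ¬ p ∣ m := by
    intro p hp hdvd
    exact (hTmem p hp).2 (hFm (Nat.mem_primeFactors.mpr ⟨(hTmem p hp).1, hdvd, hmne0⟩))
  have hSQ : ∀ p ∈ S, p ∈ Q := fun p hp =>
    hQ_mem_iff p (hSmem p hp).1 (hS_notm p hp) (hyS p hp)
  have hTQ : ∀ p ∈ T, p ∈ Q := fun p hp =>
    hQ_mem_iff p (hTmem p hp).1 (hT_notm p hp) (hyT p hp)
  have hdvd_S : ∀ p ∈ S, (p:ℤ) ∣ ((n:ℤ) + b) := by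
    intro p hp
    have hpQ := hSQ p hp
    have hres : aRes p = ((-b) % p).toNat := by
      rw [haRes_def]
      simp only [if_neg (hQ_ne_m p hpQ), if_pos hp]
    have h1 := dvd_of_res p (-b) (hQ_tset p hpQ) hres (hSmem p hp).1.pos
    simpa [sub_neg_eq_add] using h1
  have hdvd_T : ∀ p ∈ T, (p:ℤ) ∣ ((n:ℤ) + d) := by
    intro p hp
    have hpS : p ∉ S := Finset.disjoint_right.mp hST hp
    have hpQ := hTQ p hp
    have hres : aRes p = ((-d) % p).toNat := by
      rw [haRes_def]
      simp only [if_neg (hQ_ne_m p hpQ), if_neg hpS, if_pos hp]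
    have h1 := dvd_of_res p (-d) (hQ_tset p hpQ) hres (hTmem p hp).1.pos
    simpa [sub_neg_eq_add] using h1
  have h2S : 2 ∉ S := fun hh => (hSmem 2 hh).2 hF2
  have h2T : 2 ∉ T := fun hh => (hTmem 2 hh).2 hF2
  have h2_two : two? → ((2:ℤ) ∣ ((n:ℤ) + d) ∧ ¬ (2:ℤ) ∣ ((n:ℤ) + b)) := by
    intro h2
    have h2Q : 2 ∈ Q := hQ_mem_iff 2 Nat.prime_two h2.1 (by omega)
    have hres : aRes 2 = ((-d) % (2:ℕ)).toNat := by
      rw [haRes_def]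
      simp only [if_neg (hQ_ne_m 2 h2Q), if_neg h2S, if_neg h2T,
        if_pos (show ((2:ℕ) = 2 ∧ two?) from ⟨rfl, h2⟩)]
      norm_num
      intro hn
      exact absurd h2 hn
    have hdvd : (2:ℤ) ∣ ((n:ℤ) + d) := by
      have h1 := dvd_of_res 2 (-d) (hQ_tset 2 h2Q) hres (by omega)
      have h1' : (2:ℤ) ∣ ((n:ℤ) - (-d)) := by exact_mod_cast h1
      simpa [sub_neg_eq_add] using h1'
    refine ⟨hdvd, ?_⟩
    intro hb2
    apply h2.2
    have h3 : (2:ℤ) ∣ ((n:ℤ)+b) - ((n:ℤ)+d) := dvd_sub hb2 hdvd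
    have h4 : ((n:ℤ)+b) - ((n:ℤ)+d) = b - d := by ring
    rwa [h4] at h3
  have havoid : ∀ p ∈ Q, p ∉ S → p ∉ T → ¬(p = 2 ∧ two?) →
      ¬(p:ℤ) ∣ ((n:ℤ)+b) ∧ ¬(p:ℤ) ∣ ((n:ℤ)+d) := by
    intro p hpQ hpS hpT hp2
    obtain ⟨hprime, hpm⟩ := hQ_prime p hpQ
    have hcond : p.Prime ∧ (3 ≤ p ∨ (p:ℤ) ∣ (b-d)) := by
      refine ⟨hprime, ?_⟩
      by_cases h3 : 3 ≤ p
      · exact Or.inl h3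
      · have hp2' : p = 2 := by have := hprime.two_le; omega
        right
        subst hp2'
        by_contra hnd
        exact hp2 ⟨rfl, hpm, hnd⟩
    have hres : aRes p = avoidRes p := by
      rw [haRes_def]
      simp only [if_neg (hQ_ne_m p hpQ), if_neg hpS, if_neg hpT, if_neg hp2]
    have hav : avoidRes p = Classical.choose (exists_residue p hcond.1 b d hcond.2) := by
      rw [havoidRes_def]
      simp only [dif_pos hcond]
    have hspec := Classical.choose_spec (exists_residue p hcond.1 b d hcond.2)
    have h1 := hcongZ p (hQ_tset p hpQ)
    rw [hres, hav] at h1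
    constructor
    · intro hdvd
      exact hspec.1 ((dvd_iff_of_modeq (h1.add_right b)).mp hdvd)
    · intro hdvd
      exact hspec.2 ((dvd_iff_of_modeq (h1.add_right d)).mp hdvd)
  have hdvd_m_iff : ∀ p : ℕ, p ∣ m → ∀ x : ℤ, ((p:ℤ) ∣ ((n:ℤ)+x) ↔ (p:ℤ) ∣ (r+x)) := by
    intro p hpm x
    have h1 : (n:ℤ) ≡ r [ZMOD (p:ℤ)] := hmodr.of_dvd (by exact_mod_cast hpm)
    exact dvd_iff_of_modeq (h1.add_right x)
  clear_value kk n M aRes avoidRes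
  -- ## classification of prime factors
  set Ab : Finset ℕ := Ab0 ∪ S with hAb_def
  set Ad : Finset ℕ := Ad0 ∪ T with hAd_def
  have hNb_ne : Nb ≠ 0 := by omega
  have hNd_ne : Nd ≠ 0 := by omega
  have hdvd_Nb_iff : ∀ p : ℕ, (p ∣ Nb ↔ (p:ℤ) ∣ ((n:ℤ)+b)) := by
    intro p
    constructor
    · intro h; rw [← hNb_cast]; exact_mod_cast h
    · intro h; rw [← hNb_cast] at h; exact_mod_cast h
  have hdvd_Nd_iff : ∀ p : ℕ, (p ∣ Nd ↔ (p:ℤ) ∣ ((n:ℤ)+d)) := by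
    intro p
    constructor
    · intro h; rw [← hNd_cast]; exact_mod_cast h
    · intro h; rw [← hNd_cast] at h; exact_mod_cast h
  have hAb_sub : Ab ⊆ Nb.primeFactors := by
    intro p hp
    rcases Finset.mem_union.mp hp with hp0 | hpS
    · have hpf := hAb0_sub hp0
      have hpP := Nat.prime_of_mem_primeFactors hpf
      have hpm : p ∣ m := (Nat.mem_primeFactors.mp hpf).2.1
      have hpdvd := (Finset.mem_filter.mp hp0).2
      exact Nat.mem_primeFactors.mpr
        ⟨hpP, (hdvd_Nb_iff p).mpr ((hdvd_m_iff p hpm b).mpr hpdvd), hNb_ne⟩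
    · exact Nat.mem_primeFactors.mpr
        ⟨(hSmem p hpS).1, (hdvd_Nb_iff p).mpr (hdvd_S p hpS), hNb_ne⟩
  have hAd0'_case : ∀ p ∈ Ad0', p ∈ Nd.primeFactors := by
    intro p hp0
    have hpf := hAd0'_sub hp0
    have hpP := Nat.prime_of_mem_primeFactors hpf
    have hpm : p ∣ m := (Nat.mem_primeFactors.mp hpf).2.1
    have hpdvd := (Finset.mem_filter.mp hp0).2
    exact Nat.mem_primeFactors.mpr
      ⟨hpP, (hdvd_Nd_iff p).mpr ((hdvd_m_iff p hpm d).mpr hpdvd), hNd_ne⟩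
  have hAd_sub : Ad ⊆ Nd.primeFactors := by
    intro p hp
    rcases Finset.mem_union.mp hp with hp0 | hpT
    · rw [hAd0_def] at hp0
      by_cases htwo : two?
      · rw [if_pos htwo] at hp0
        rcases Finset.mem_insert.mp hp0 with rfl | hp0'
        · exact Nat.mem_primeFactors.mpr
            ⟨Nat.prime_two, (hdvd_Nd_iff 2).mpr (by exact_mod_cast (h2_two htwo).1), hNd_ne⟩
        · exact hAd0'_case p hp0'
      · rw [if_neg htwo] at hp0
        exact hAd0'_case p hp0
    · exact Nat.mem_primeFactors.mpr
        ⟨(hTmem p hpT).1, (hdvd_Nd_iff p).mpr (hdvd_T p hpT), hNd_ne⟩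
  have hUb_big : ∀ p ∈ Nb.primeFactors, p ∉ Ab → Y+1 ≤ p := by
    intro p hpf hpA
    by_contra hle
    push_neg at hle
    have hpP := Nat.prime_of_mem_primeFactors hpf
    have hpdvd : (p:ℤ) ∣ ((n:ℤ)+b) := (hdvd_Nb_iff p).mp (Nat.mem_primeFactors.mp hpf).2.1
    by_cases hpm : p ∣ m
    · have h1 : (p:ℤ) ∣ (r+b) := (hdvd_m_iff p hpm b).mp hpdvd
      exact hpA (Finset.mem_union_left _
        (Finset.mem_filter.mpr ⟨Nat.mem_primeFactors.mpr ⟨hpP, hpm, hmne0⟩, h1⟩))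
    · have hpQ : p ∈ Q := hQ_mem_iff p hpP hpm (by omega)
      by_cases hpS : p ∈ S
      · exact hpA (Finset.mem_union_right _ hpS)
      by_cases hpT : p ∈ T
      · have h1 := hdvd_T p hpT
        have h2 : (p:ℤ) ∣ (b - d) := by
          have h3 : (p:ℤ) ∣ ((n:ℤ)+b) - ((n:ℤ)+d) := dvd_sub hpdvd h1
          have h4 : ((n:ℤ)+b) - ((n:ℤ)+d) = b - d := by ring
          rwa [h4] at h3
        have h3 : p ∣ (b-d).natAbs := by
          rw [← Int.natAbs_natCast p]
          exact Int.natAbs_dvd_natAbs.mpr h2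
        have hbd0 : (b-d).natAbs ≠ 0 := by
          simp only [ne_eq, Int.natAbs_eq_zero, sub_eq_zero]
          exact hbd
        exact (hTmem p hpT).2 (hFbd (Nat.mem_primeFactors.mpr ⟨hpP, h3, hbd0⟩))
      by_cases hp2 : p = 2 ∧ two?
      · obtain ⟨rfl, htwo⟩ := hp2
        exact (h2_two htwo).2 (by exact_mod_cast hpdvd)
      · exact (havoid p hpQ hpS hpT hp2).1 hpdvd
  have hUd_big : ∀ p ∈ Nd.primeFactors, p ∉ Ad → Y+1 ≤ p := by
    intro p hpf hpA
    by_contra hle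
    push_neg at hle
    have hpP := Nat.prime_of_mem_primeFactors hpf
    have hpdvd : (p:ℤ) ∣ ((n:ℤ)+d) := (hdvd_Nd_iff p).mp (Nat.mem_primeFactors.mp hpf).2.1
    by_cases hpm : p ∣ m
    · have h1 : (p:ℤ) ∣ (r+d) := (hdvd_m_iff p hpm d).mp hpdvd
      apply hpA
      apply Finset.mem_union_left
      have hmem' : p ∈ Ad0' :=
        Finset.mem_filter.mpr ⟨Nat.mem_primeFactors.mpr ⟨hpP, hpm, hmne0⟩, h1⟩
      rw [hAd0_def]
      split
      · exact Finset.mem_insert_of_mem hmem'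
      · exact hmem'
    · have hpQ : p ∈ Q := hQ_mem_iff p hpP hpm (by omega)
      by_cases hpT : p ∈ T
      · exact hpA (Finset.mem_union_right _ hpT)
      by_cases hpS : p ∈ S
      · have h1 := hdvd_S p hpS
        have h2 : (p:ℤ) ∣ (b - d) := by
          have h3 : (p:ℤ) ∣ ((n:ℤ)+b) - ((n:ℤ)+d) := dvd_sub h1 hpdvd
          have h4 : ((n:ℤ)+b) - ((n:ℤ)+d) = b - d := by ring
          rwa [h4] at h3
        have h3 : p ∣ (b-d).natAbs := by
          rw [← Int.natAbs_natCast p]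
          exact Int.natAbs_dvd_natAbs.mpr h2
        have hbd0 : (b-d).natAbs ≠ 0 := by
          simp only [ne_eq, Int.natAbs_eq_zero, sub_eq_zero]
          exact hbd
        exact (hSmem p hpS).2 (hFbd (Nat.mem_primeFactors.mpr ⟨hpP, h3, hbd0⟩))
      by_cases hp2 : p = 2 ∧ two?
      · obtain ⟨rfl, htwo⟩ := hp2
        apply hpA
        apply Finset.mem_union_left
        rw [hAd0_def, if_pos htwo]
        exact Finset.mem_insert_self _ _
      · exact (havoid p hpQ hpS hpT hp2).2 hpdvd
  -- ## product decomposition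
  have hAb0_disj_S : Disjoint Ab0 S := by
    rw [Finset.disjoint_left]
    intro p hp0 hpS
    exact (hSmem p hpS).2 (hFm (hAb0_sub hp0))
  have hAd0_disj_T : Disjoint Ad0 T := by
    rw [Finset.disjoint_left]
    intro p hp0 hpT
    apply (hTmem p hpT).2
    rw [hAd0_def] at hp0
    by_cases htwo : two?
    · rw [if_pos htwo] at hp0
      rcases Finset.mem_insert.mp hp0 with rfl | hp0'
      · exact hF2
      · exact hFm (hAd0'_sub hp0')
    · rw [if_neg htwo] at hp0
      exact hFm (hAd0'_sub hp0)
  set Ub : Finset ℕ := Nb.primeFactors \ Ab with hUb_def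
  set Ud : Finset ℕ := Nd.primeFactors \ Ad with hUd_def
  set Eb : ℝ := ∏ p ∈ Ub, (1-1/(p:ℝ)) with hEb_def
  set Ed : ℝ := ∏ p ∈ Ud, (1-1/(p:ℝ)) with hEd_def
  have hsplit_b : (Nb.totient : ℝ) = Nb * (cb0 * PSv * Eb) := by
    rw [totient_real]
    congr 1
    rw [← Finset.prod_sdiff hAb_sub]
    rw [hEb_def, hUb_def, hcb0_def, hPSv_def, hAb_def, Finset.prod_union hAb0_disj_S]
    ring
  have hsplit_d : (Nd.totient : ℝ) = Nd * (cd0 * PTv * Ed) := by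
    rw [totient_real]
    congr 1
    rw [← Finset.prod_sdiff hAd_sub]
    rw [hEd_def, hUd_def, hcd0_def, hPTv_def, hAd_def, Finset.prod_union hAd0_disj_T]
    ring
  -- ## log bounds and E bounds
  have hlogNb : Real.log Nb ≤ δ*((Y:ℝ)+1)*Real.log ((Y:ℝ)+1) := by
    have h1 := log_chain Nb C M m Y hNb1 hNb_ub hMle hC1 hm hM1
    linarith [hY_log]
  have hlogNd : Real.log Nd ≤ δ*((Y:ℝ)+1)*Real.log ((Y:ℝ)+1) := by
    have h1 := log_chain Nd C M m Y hNd1 hNd_ub hMle hC1 hm hM1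
    linarith [hY_log]
  have hUb_mem : ∀ p ∈ Ub, Y+1 ≤ p := by
    intro p hp
    rw [hUb_def, Finset.mem_sdiff] at hp
    exact hUb_big p hp.1 hp.2
  have hUd_mem : ∀ p ∈ Ud, Y+1 ≤ p := by
    intro p hp
    rw [hUd_def, Finset.mem_sdiff] at hp
    exact hUd_big p hp.1 hp.2
  obtain ⟨hEb_lo, hEb_hi⟩ :=
    E_bound Nb Y Ub δ hδ0 (hUb_def ▸ Finset.sdiff_subset) hUb_mem hNb1 hY2 hlogNb
  obtain ⟨hEd_lo, hEd_hi⟩ :=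
    E_bound Nd Y Ud δ hδ0 (hUd_def ▸ Finset.sdiff_subset) hUd_mem hNd1 hY2 hlogNd
  rw [← hEb_def] at hEb_lo hEb_hi
  rw [← hEd_def] at hEd_lo hEd_hi
  clear_value Q tset Ab0 Ad0' Ad0 Ab Ad F Ub Ud Eb Ed Nb Nd cb0 cd0 PSv PTv τ B W C α δ
  -- ## the three multiplicative factors
  have hδ14 : δ ≤ 1/4 := by rw [hδ_def]; linarith
  have hδα : δ ≤ α := by rw [hδ_def]; linarith
  have hEb_pos : 0 < Eb := by linarith
  have hEd_pos : 0 < Ed := by linarith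
  have hNbR : (0:ℝ) < (Nb:ℝ) := by exact_mod_cast hNb1
  have hNdR : (0:ℝ) < (Nd:ℝ) := by exact_mod_cast hNd1
  set X : ℝ := (Nb:ℝ)/(Nd:ℝ) with hX_def
  have hNd_big : (B:ℝ) ≤ α * (Nd:ℝ) := by
    have h1 : ((⌈(B:ℝ)/α⌉₊:ℕ) : ℤ) ≤ (Nd:ℤ) := by
      rw [hNd_cast]
      have h5 : (W:ℤ) = (B:ℤ) + (⌈(B:ℝ)/α⌉₊:ℕ) + 2 := by rw [hW_def]; push_cast; ring
      have := neg_abs_le d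
      linarith
    have h2 : ((⌈(B:ℝ)/α⌉₊:ℕ) : ℝ) ≤ (Nd:ℝ) := by exact_mod_cast h1
    have h3 : (B:ℝ)/α ≤ (Nd:ℝ) := le_trans (Nat.le_ceil _) h2
    calc (B:ℝ) = α * ((B:ℝ)/α) := by field_simp
      _ ≤ α * (Nd:ℝ) := by exact mul_le_mul_of_nonneg_left h3 hα0.le
  have hX_bounds : 1 - α ≤ X ∧ X ≤ 1 + α := by
    have h1 : (Nb:ℝ) = (Nd:ℝ) + ((b:ℝ) - (d:ℝ)) := by
      have h0 : (Nb:ℤ) = (Nd:ℤ) + (b - d) := by rw [hNb_cast, hNd_cast]; ring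
      exact_mod_cast h0
    have h2 : |(b:ℝ) - (d:ℝ)| ≤ (B:ℝ) := by
      have h0 : |b - d| ≤ (B:ℤ) := by
        have h00 : |b - d| ≤ |b| + |d| := by
          calc |b - d| = |b + (-d)| := by ring_nf
            _ ≤ |b| + |-d| := abs_add_le _ _
            _ = |b| + |d| := by rw [abs_neg]
        linarith
      have h0' : |((b - d : ℤ) : ℝ)| ≤ ((B:ℤ):ℝ) := by
        rw [← Int.cast_abs]
        exact_mod_cast h0
      push_cast at h0'
      convert h0' using 2 <;> push_cast <;> ring
    have h3 : X - 1 = ((b:ℝ)-(d:ℝ))/(Nd:ℝ) := by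
      rw [hX_def, h1]; field_simp; ring
    have h4 : |X - 1| ≤ α := by
      rw [h3, abs_div, abs_of_pos hNdR, div_le_iff₀ hNdR]
      calc |(b:ℝ)-(d:ℝ)| ≤ (B:ℝ) := h2
        _ ≤ α * (Nd:ℝ) := hNd_big
    obtain ⟨ha, hb'⟩ := abs_le.mp h4
    constructor <;> linarith
  have hρτ : 1 - α ≤ (PSv/PTv)/τ ∧ (PSv/PTv)/τ ≤ 1 + α := by
    obtain ⟨h1, h2⟩ := abs_lt.mp hρ
    constructor
    · rw [le_div_iff₀ hτ0]
      have e : (1-α)*τ = τ - α*τ := by ring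
      rw [e]; linarith
    · rw [div_le_iff₀ hτ0]
      have e : (1+α)*τ = τ + α*τ := by ring
      rw [e]; linarith
  have hE_bounds : 1 - α ≤ Eb/Ed ∧ Eb/Ed ≤ 1 + α := by
    constructor
    · rw [le_div_iff₀ hEd_pos]
      have e1 : (1-α)*Ed ≤ (1-α)*1 := by
        apply mul_le_mul_of_nonneg_left hEd_hi
        linarith
      linarith
    · rw [div_le_iff₀ hEd_pos]
      have e1 : (1+α)*(1-δ) ≤ (1+α)*Ed := by
        apply mul_le_mul_of_nonneg_left hEd_lo
        linarith
      have e2 : (1:ℝ) ≤ (1+α)*(1-δ) := by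
        rw [hδ_def]
        linarith [mul_le_mul_of_nonneg_left hα12 hα0.le]
      linarith
  -- ## final assembly
  have hφd_pos : (0:ℝ) < (Nd.totient : ℝ) := by
    have := Nat.totient_pos.mpr (show 0 < Nd by omega)
    exact_mod_cast this
  set ratio : ℝ := (Nb.totient : ℝ) / (Nd.totient : ℝ) with hratio_def
  have hratio_eq : ratio = X * ((PSv/PTv)/τ) * (Eb/Ed) * t := by
    rw [hratio_def, hsplit_b, hsplit_d, hX_def, hτ_def]
    have hPTv_ne : PTv ≠ 0 := hPT0.ne'
    have hcd0_ne : cd0 ≠ 0 := hcd0_pos.ne'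
    have hcb0_ne : cb0 ≠ 0 := hcb0_pos.ne'
    have hEd_ne : Ed ≠ 0 := hEd_pos.ne'
    have hNd_ne' : (Nd:ℝ) ≠ 0 := hNdR.ne'
    have ht_ne : t ≠ 0 := ht.ne'
    field_simp
  refine ⟨ratio, ⟨n, by omega, hNb_pos, hNd_pos, hmodr, ?_⟩, ?_⟩
  · rw [hratio_def, hNb_def, hNd_def]
  · rw [Real.dist_eq, hratio_eq]
    obtain ⟨hx1, hx2⟩ := hX_bounds
    obtain ⟨hu1, hu2⟩ := hρτ
    obtain ⟨hv1, hv2⟩ := hE_bounds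
    set x : ℝ := X with hx_def
    set u : ℝ := (PSv/PTv)/τ with hu_def
    set v : ℝ := Eb/Ed with hv_def
    have hα1 : α ≤ 1 := by linarith
    have hxp : 0 < x := by linarith
    have hup : 0 < u := by linarith
    have hvp : 0 < v := by linarith
    have h1' : (0:ℝ) ≤ 1 - α := by linarith
    have h1p : (0:ℝ) ≤ 1 + α := by linarith
    have hxu_hi : x*u ≤ (1+α)*(1+α) := mul_le_mul hx2 hu2 hup.le h1p
    have hxu_lo : (1-α)*(1-α) ≤ x*u := mul_le_mul hx1 hu1 h1' hxp.le
    have hxu_pos : 0 < x*u := mul_pos hxp hup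
    have hxuv_hi : x*u*v ≤ (1+α)*(1+α)*(1+α) := mul_le_mul hxu_hi hv2 hvp.le (by positivity)
    have hxuv_lo : (1-α)*(1-α)*(1-α) ≤ x*u*v := mul_le_mul hxu_lo hv1 h1' hxu_pos.le
    have k1 : 1 - x*u*v ≤ 3*α := by
      linarith [hxuv_lo, mul_nonneg (mul_nonneg hα0.le hα0.le) (show (0:ℝ) ≤ 3 - α by linarith)]
    have k2 : x*u*v - 1 ≤ 7*α := by
      linarith [hxuv_hi, mul_le_mul_of_nonneg_left hα12 hα0.le,
        mul_le_mul_of_nonneg_left hα12 (mul_nonneg hα0.le hα0.le)]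
    have m1 := mul_le_mul_of_nonneg_left k1 ht.le
    have m2 := mul_le_mul_of_nonneg_left k2 ht.le
    rw [abs_lt]
    constructor <;> linarith [m1, m2, hαε, mul_nonneg ht.le hα0.le]
end

section
/- Let t₁, t₂, u₁, u₂ ∈ ℕ be such that gcd(t_i, u_j) = 1 for all i, j ∈ {1,2}, and assume rad(t₁) ≠ rad(t₂) or rad(u₁) ≠ rad(u₂). Then (φ(t₁)/t₁)/(φ(u₁)/u₁) ≠ (φ(t₂)/t₂)/(φ(u₂)/u₂). -/
/-- The radical (squarefree kernel) of a natural number. -/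
def rad (n : ℕ) : ℕ := ∏ p ∈ n.primeFactors, p

lemma key_aux : ∀ n (A B : Finset ℕ), (A ∪ B).card = n →
    (∀ p ∈ A, p.Prime) → (∀ p ∈ B, p.Prime) →
    (∏ p ∈ A, (p - 1)) * ∏ p ∈ B, p = (∏ p ∈ B, (p - 1)) * ∏ p ∈ A, p → A = B := by
  intro n
  induction n using Nat.strong_induction_on with
  | _ n IH =>
    intro A B hcard hA hB h
    rcases eq_or_ne n 0 with rfl | hn0
    · have : A ∪ B = ∅ := Finset.card_eq_zero.mp hcard
      have hA0 : A = ∅ := Finset.union_eq_empty.mp this |>.1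
      have hB0 : B = ∅ := Finset.union_eq_empty.mp this |>.2
      rw [hA0, hB0]
    · have hne : (A ∪ B).Nonempty := Finset.card_pos.mp (by omega)
      set q := (A ∪ B).max' hne with hq
      have hqmem : q ∈ A ∪ B := Finset.max'_mem _ _
      have hqmax : ∀ p ∈ A ∪ B, p ≤ q := fun p hp => Finset.le_max' _ p hp
      have hqprime : q.Prime := by
        rcases Finset.mem_union.mp hqmem with h' | h'
        · exact hA q h'
        · exact hB q h'
      -- helper: q doesn't divide a product of (p-1) over a subset
      have hnotdvd1 : ¬ q ∣ ∏ p ∈ A, (p - 1) := by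
        intro hd
        obtain ⟨p, hp, hdp⟩ := hqprime.prime.exists_mem_finset_dvd hd
        have hpp := hA p hp
        have : p ≤ q := hqmax p (Finset.mem_union_left _ hp)
        have h1 : 1 ≤ p - 1 := by have := hpp.two_le; omega
        have := Nat.le_of_dvd (by omega) hdp
        omega
      have hnotdvd2 : ¬ q ∣ ∏ p ∈ B, (p - 1) := by
        intro hd
        obtain ⟨p, hp, hdp⟩ := hqprime.prime.exists_mem_finset_dvd hd
        have hpp := hB p hp
        have : p ≤ q := hqmax p (Finset.mem_union_right _ hp)
        have h1 : 1 ≤ p - 1 := by have := hpp.two_le; omega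
        have := Nat.le_of_dvd (by omega) hdp
        omega
      by_cases hqA : q ∈ A
      · by_cases hqB : q ∈ B
        · -- cancel q and q-1
          have eA : ∏ p ∈ A, (p - 1) = (q - 1) * ∏ p ∈ A.erase q, (p - 1) :=
            (Finset.mul_prod_erase A _ hqA).symm
          have eB : ∏ p ∈ B, (p - 1) = (q - 1) * ∏ p ∈ B.erase q, (p - 1) :=
            (Finset.mul_prod_erase B _ hqB).symm
          have eA' : ∏ p ∈ A, p = q * ∏ p ∈ A.erase q, p :=
            (Finset.mul_prod_erase A _ hqA).symm
          have eB' : ∏ p ∈ B, p = q * ∏ p ∈ B.erase q, p :=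
            (Finset.mul_prod_erase B _ hqB).symm
          rw [eA, eB, eA', eB'] at h
          have hq1 : 0 < (q - 1) * q := by
            have := hqprime.two_le
            exact Nat.mul_pos (by omega) (by omega)
          have h' : (∏ p ∈ A.erase q, (p - 1)) * ∏ p ∈ B.erase q, p =
              (∏ p ∈ B.erase q, (p - 1)) * ∏ p ∈ A.erase q, p := by
            have := h
            ring_nf at this ⊢
            exact Nat.eq_of_mul_eq_mul_left hq1 (by linarith [this])
          have hcard' : ((A.erase q) ∪ (B.erase q)).card < n := by
            rw [← Finset.erase_union_distrib]
            have := Finset.card_erase_lt_of_mem hqmem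
            omega
          have := IH _ hcard' (A.erase q) (B.erase q) rfl
            (fun p hp => hA p (Finset.mem_of_mem_erase hp))
            (fun p hp => hB p (Finset.mem_of_mem_erase hp)) h'
          have : A = B := by
            rw [← Finset.insert_erase hqA, ← Finset.insert_erase hqB, this]
          exact this
        · -- q ∈ A, q ∉ B : contradiction
          exfalso
          have hdvd : q ∣ (∏ p ∈ B, (p - 1)) * ∏ p ∈ A, p :=
            Dvd.dvd.mul_left (Finset.dvd_prod_of_mem _ hqA) _
          rw [← h] at hdvd
          rcases hqprime.prime.dvd_mul.mp hdvd with hd | hd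
          · exact hnotdvd1 hd
          · obtain ⟨p, hp, hdp⟩ := hqprime.prime.exists_mem_finset_dvd hd
            have : q = p := ((Nat.prime_dvd_prime_iff_eq hqprime (hB p hp)).mp hdp)
            exact hqB (this ▸ hp)
      · have hqB : q ∈ B := by
          rcases Finset.mem_union.mp hqmem with h' | h'
          · exact absurd h' hqA
          · exact h'
        exfalso
        have hdvd : q ∣ (∏ p ∈ A, (p - 1)) * ∏ p ∈ B, p :=
          Dvd.dvd.mul_left (Finset.dvd_prod_of_mem _ hqB) _
        rw [h] at hdvd
        rcases hqprime.prime.dvd_mul.mp hdvd with hd | hd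
        · exact hnotdvd2 hd
        · obtain ⟨p, hp, hdp⟩ := hqprime.prime.exists_mem_finset_dvd hd
          have : q = p := ((Nat.prime_dvd_prime_iff_eq hqprime (hA p hp)).mp hdp)
          exact hqA (this ▸ hp)

theorem totient_ratio_ne (t₁ t₂ u₁ u₂ : ℕ) (ht₁ : 0 < t₁) (ht₂ : 0 < t₂)
    (hu₁ : 0 < u₁) (hu₂ : 0 < u₂)
    (h11 : Nat.gcd t₁ u₁ = 1) (h12 : Nat.gcd t₁ u₂ = 1)
    (h21 : Nat.gcd t₂ u₁ = 1) (h22 : Nat.gcd t₂ u₂ = 1)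
    (hrad : rad t₁ ≠ rad t₂ ∨ rad u₁ ≠ rad u₂) :
    ((Nat.totient t₁ : ℝ) / t₁) / ((Nat.totient u₁ : ℝ) / u₁) ≠
      ((Nat.totient t₂ : ℝ) / t₂) / ((Nat.totient u₂ : ℝ) / u₂) := by
  intro h
  -- ratio formula in ℝ
  have ratio : ∀ n : ℕ, 0 < n → (Nat.totient n : ℝ) / n =
      (∏ p ∈ n.primeFactors, ((p : ℝ) - 1)) / ∏ p ∈ n.primeFactors, (p : ℝ) := by
    intro n hn
    have key := Nat.totient_mul_prod_primeFactors n
    have hP : (0:ℝ) < ∏ p ∈ n.primeFactors, (p : ℝ) :=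
      Finset.prod_pos fun p hp => by
        exact_mod_cast (Nat.prime_of_mem_primeFactors hp).pos
    have hprod : ∏ p ∈ n.primeFactors, ((p:ℝ) - 1) =
        ((∏ p ∈ n.primeFactors, (p - 1) : ℕ) : ℝ) := by
      push_cast
      exact Finset.prod_congr rfl fun p hp => by
        rw [Nat.cast_sub (Nat.prime_of_mem_primeFactors hp).one_le]; norm_num
    have hcast : ((Nat.totient n : ℝ)) * ∏ p ∈ n.primeFactors, (p:ℝ) =
        (n : ℝ) * ∏ p ∈ n.primeFactors, ((p:ℝ) - 1) := by
      rw [hprod, ← Nat.cast_prod, ← Nat.cast_mul, key, Nat.cast_mul]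
    field_simp
    linarith [hcast]
  rw [ratio t₁ ht₁, ratio t₂ ht₂, ratio u₁ hu₁, ratio u₂ hu₂] at h
  set S₁ := t₁.primeFactors
  set S₂ := t₂.primeFactors
  set T₁ := u₁.primeFactors
  set T₂ := u₂.primeFactors
  have d11 : Disjoint S₁ T₁ := Nat.Coprime.disjoint_primeFactors h11
  have d12 : Disjoint S₁ T₂ := Nat.Coprime.disjoint_primeFactors h12
  have d21 : Disjoint S₂ T₁ := Nat.Coprime.disjoint_primeFactors h21
  have d22 : Disjoint S₂ T₂ := Nat.Coprime.disjoint_primeFactors h22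
  have hprime : ∀ (S : Finset ℕ), S = t₁.primeFactors ∨ S = t₂.primeFactors ∨
      S = u₁.primeFactors ∨ S = u₂.primeFactors → ∀ p ∈ S, p.Prime := by
    rintro S (rfl | rfl | rfl | rfl) p hp <;> exact Nat.prime_of_mem_primeFactors hp
  have Ppos : ∀ (S : Finset ℕ), (∀ p ∈ S, p.Prime) →
      (0:ℝ) < ∏ p ∈ S, (p : ℝ) := fun S hS =>
    Finset.prod_pos fun p hp => by exact_mod_cast (hS p hp).pos
  have Qpos : ∀ (S : Finset ℕ), (∀ p ∈ S, p.Prime) →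
      (0:ℝ) < ∏ p ∈ S, ((p : ℝ) - 1) := fun S hS =>
    Finset.prod_pos fun p hp => by
      have := (hS p hp).two_le
      have : (2:ℝ) ≤ p := by exact_mod_cast this
      linarith
  have hS₁ := hprime S₁ (Or.inl rfl)
  have hS₂ := hprime S₂ (Or.inr (Or.inl rfl))
  have hT₁ := hprime T₁ (Or.inr (Or.inr (Or.inl rfl)))
  have hT₂ := hprime T₂ (Or.inr (Or.inr (Or.inr rfl)))
  -- cross-multiply the real equation
  have hP1 := Ppos S₁ hS₁; have hP2 := Ppos S₂ hS₂
  have hP3 := Ppos T₁ hT₁; have hP4 := Ppos T₂ hT₂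
  have hQ1 := Qpos S₁ hS₁; have hQ2 := Qpos S₂ hS₂
  have hQ3 := Qpos T₁ hT₁; have hQ4 := Qpos T₂ hT₂
  field_simp at h
  have castQ : ∀ (S : Finset ℕ), (∀ p ∈ S, p.Prime) →
      ∏ p ∈ S, ((p:ℝ) - 1) = ((∏ p ∈ S, (p - 1) : ℕ) : ℝ) := by
    intro S hS
    push_cast
    exact Finset.prod_congr rfl fun p hp => by
      rw [Nat.cast_sub (hS p hp).one_le]; norm_num
  have castP : ∀ S : Finset ℕ, ∏ p ∈ S, ((p:ℝ)) = ((∏ p ∈ S, p : ℕ) : ℝ) := by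
    intro S; push_cast; rfl
  rw [castQ S₁ hS₁, castQ S₂ hS₂, castQ T₁ hT₁, castQ T₂ hT₂,
    castP S₁, castP S₂, castP T₁, castP T₂] at h
  have hN : ((∏ p ∈ S₁, (p - 1)) * ∏ p ∈ T₁, p) * ((∏ p ∈ S₂, p) * ∏ p ∈ T₂, (p - 1)) =
      ((∏ p ∈ S₂, (p - 1)) * ∏ p ∈ T₂, p) * ((∏ p ∈ S₁, p) * ∏ p ∈ T₁, (p - 1)) := by
    have h' := h
    norm_cast at h'
    linarith [h']
  have hU : (∏ p ∈ S₁ ∪ T₂, (p - 1)) * ∏ p ∈ S₂ ∪ T₁, p =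
      (∏ p ∈ S₂ ∪ T₁, (p - 1)) * ∏ p ∈ S₁ ∪ T₂, p := by
    rw [Finset.prod_union d12, Finset.prod_union d21, Finset.prod_union d12,
      Finset.prod_union d21]
    ring_nf
    ring_nf at hN
    linarith [hN]
  have hAB : S₁ ∪ T₂ = S₂ ∪ T₁ := by
    refine key_aux _ _ _ rfl ?_ ?_ hU
    · intro p hp
      rcases Finset.mem_union.mp hp with h' | h'
      · exact hS₁ p h'
      · exact hT₂ p h'
    · intro p hp
      rcases Finset.mem_union.mp hp with h' | h'
      · exact hS₂ p h'
      · exact hT₁ p h'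
  have e1 : S₁ = S₂ := by
    apply Finset.Subset.antisymm <;> intro p hp
    · have : p ∈ S₂ ∪ T₁ := hAB ▸ Finset.mem_union_left _ hp
      rcases Finset.mem_union.mp this with h' | h'
      · exact h'
      · exact absurd h' (Finset.disjoint_left.mp d11 hp)
    · have : p ∈ S₁ ∪ T₂ := hAB ▸ Finset.mem_union_left _ hp
      rcases Finset.mem_union.mp this with h' | h'
      · exact h'
      · exact absurd h' (Finset.disjoint_left.mp d22 hp)
  have e2 : T₁ = T₂ := by
    apply Finset.Subset.antisymm <;> intro p hp
    · have : p ∈ S₁ ∪ T₂ := hAB ▸ Finset.mem_union_right _ hp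
      rcases Finset.mem_union.mp this with h' | h'
      · exact absurd hp (Finset.disjoint_left.mp d11 h')
      · exact h'
    · have : p ∈ S₂ ∪ T₁ := hAB ▸ Finset.mem_union_right _ hp
      rcases Finset.mem_union.mp this with h' | h'
      · exact absurd hp (Finset.disjoint_left.mp d22 h')
      · exact h'
  rcases hrad with hr | hr
  · exact hr (by unfold rad; rw [show t₁.primeFactors = S₁ from rfl, e1])
  · exact hr (by unfold rad; rw [show u₁.primeFactors = T₁ from rfl, e2])
end

section
/- Let b ∈ ℕ with b ≥ 2 and k ∈ ℕ with rad(b) ∤ k. Then ρ(kb, b) = ∞, i.e., with a := kb, g := gcd(a,b), a' := a/g, b' := b/g, there are infinitely many positive integers n > -b/a with rad(a'n + b') | g. -/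
/-- The set of positive integers `n` with `a'n + b' > 0` and `rad(a'n + b') ∣ g`,
where `g = gcd(a,b)`, `a' = a/g`, `b' = b/g`; its cardinality is `ρ(a,b)`. -/
def Rset (a : ℕ) (b : ℤ) : Set ℕ :=
  {n : ℕ | 0 < n ∧ 0 < (↑(a / Int.gcd a b) : ℤ) * n + b / (Int.gcd a b : ℤ) ∧
    rad ((↑(a / Int.gcd a b) * n + b / (Int.gcd a b : ℤ)).toNat) ∣ Int.gcd a b}


theorem rho_kb_b_infinite (b : ℕ) (hb : 2 ≤ b) (k : ℕ) (hk : 0 < k) (h : ¬ rad b ∣ k) :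
    (Rset (k * b) (b : ℤ)).Infinite := by
  have hbpos : 0 < b := by omega
  -- find a prime p dividing b but not k
  obtain ⟨p, hpmem, hpk⟩ : ∃ p ∈ b.primeFactors, ¬ p ∣ k := by
    by_contra hc
    push_neg at hc
    exact h (Finset.prod_primes_dvd k
      (fun q hq => (Nat.prime_of_mem_primeFactors hq).prime) hc)
  have hp : p.Prime := Nat.prime_of_mem_primeFactors hpmem
  have hpb : p ∣ b := Nat.dvd_of_mem_primeFactors hpmem
  have hcop : p.Coprime k := (Nat.Prime.coprime_iff_not_dvd hp).mpr hpk
  set t := k.totient with ht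
  have htpos : 0 < t := Nat.totient_pos.mpr hk
  have hmod : ∀ j : ℕ, p ^ ((j + 1) * t) ≡ 1 [MOD k] := by
    intro j
    have := (Nat.ModEq.pow (j + 1) (Nat.ModEq.pow_totient hcop))
    simpa [← pow_mul, mul_comm] using this
  have hpow1 : ∀ j : ℕ, 1 < p ^ ((j + 1) * t) := by
    intro j
    exact Nat.one_lt_pow (by positivity) hp.one_lt
  have hdvd : ∀ j : ℕ, k ∣ p ^ ((j + 1) * t) - 1 := by
    intro j
    exact (Nat.modEq_iff_dvd' (le_of_lt (hpow1 j))).mp (hmod j).symm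
  set f : ℕ → ℕ := fun j => (p ^ ((j + 1) * t) - 1) / k with hf
  have hkey : ∀ j : ℕ, k * f j + 1 = p ^ ((j + 1) * t) := by
    intro j
    have := Nat.mul_div_cancel' (hdvd j)
    have h1 := le_of_lt (hpow1 j)
    simp [hf]
    omega
  -- simplify Rset for a = k*b, b' = b
  have hg : Int.gcd (↑(k * b)) (↑b : ℤ) = b := by
    rw [Int.gcd_natCast_natCast]
    simpa using Nat.gcd_mul_left k b 1
  have ha' : (k * b) / Int.gcd (↑(k * b)) (↑b : ℤ) = k := by
    rw [hg]; exact Nat.mul_div_cancel k hbpos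
  have hb' : (b : ℤ) / (Int.gcd (↑(k * b)) (↑b : ℤ) : ℤ) = 1 := by
    rw [hg]; exact Int.ediv_self (by exact_mod_cast hbpos.ne')
  apply Set.infinite_of_injective_forall_mem (f := f)
  · intro i j hij
    have : k * f i + 1 = k * f j + 1 := by rw [hij]
    rw [hkey i, hkey j] at this
    have := Nat.pow_right_injective hp.two_le this
    have := Nat.eq_of_mul_eq_mul_right htpos this
    omega
  · intro j
    have hfpos : 0 < f j := by
      rcases Nat.eq_zero_or_pos (f j) with h0 | h0
      · have := hkey j
        rw [h0] at this
        have := hpow1 j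
        omega
      · exact h0
    refine ⟨hfpos, ?_, ?_⟩
    · rw [ha', hb']
      positivity
    · rw [ha', hb', hg]
      have : ((k : ℤ) * (f j : ℤ) + 1).toNat = k * f j + 1 := by
        push_cast
        omega
      rw [this, hkey j]
      have hradp : rad (p ^ ((j + 1) * t)) = p := by
        unfold rad
        rw [Nat.primeFactors_prime_pow (by positivity) hp]
        simp
      rw [hradp]
      exact hpb
end

section
/- Let a ∈ ℕ, b ∈ ℤ, g := gcd(a,b), a' := a/g, b' := b/g. If rad(g) divides a', then there is at most one positive integer n with n > -b/a and rad(a'n+b') | g; such an n exists if and only if b' ≤ 0 and a' | 1 - b', in which case a'n + b' = 1. Hence ρ(a,b) = 1 if b' ≤ 0 and a' | 1 - b', and ρ(a,b) = 0 otherwise. -/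
theorem rho_of_rad_gcd_dvd (a : ℕ) (ha : 0 < a) (b : ℤ)
    (h : rad (Int.gcd a b) ∣ a / Int.gcd a b) :
    (Rset a b).Subsingleton ∧
    ((Rset a b).Nonempty ↔
      (b / (Int.gcd a b : ℤ) ≤ 0 ∧ (↑(a / Int.gcd a b) : ℤ) ∣ 1 - b / (Int.gcd a b : ℤ))) ∧
    (∀ n ∈ Rset a b, (↑(a / Int.gcd a b) : ℤ) * n + b / (Int.gcd a b : ℤ) = 1) := by
  set g : ℕ := Int.gcd a b with hgdef
  have hg : 0 < g := Int.gcd_pos_of_ne_zero_left b (by exact_mod_cast ha.ne')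
  have hga : g ∣ a := Int.natCast_dvd_natCast.mp (Int.gcd_dvd_left _ _)
  set a' : ℕ := a / g with ha'def
  have ha' : 0 < a' := Nat.div_pos (Nat.le_of_dvd ha hga) hg
  set b' : ℤ := b / (g : ℤ) with hb'def
  have hcast : ((a' : ℤ)) = (a : ℤ) / (g : ℤ) := by
    rw [ha'def]; exact_mod_cast Int.natCast_ediv a g
  have hcop : Int.gcd ((a' : ℤ)) b' = 1 := by
    rw [hcast, hb'def, hgdef]
    exact Int.gcd_div_gcd_div_gcd (by exact_mod_cast hg)
  -- key: every element of Rset gives a'n + b' = 1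
  have key : ∀ n ∈ Rset a b, (a' : ℤ) * n + b' = 1 := by
    intro n hn
    obtain ⟨hn0, hpos, hrad⟩ := hn
    set m : ℤ := (a' : ℤ) * n + b' with hmdef
    have hMcast : ((m.toNat : ℤ)) = m := Int.toNat_of_nonneg hpos.le
    have hM : m.toNat ≠ 0 := by
      intro h0
      rw [h0] at hMcast
      omega
    by_contra hne
    have hM1 : m.toNat ≠ 1 := by
      intro h1; apply hne; rw [← hMcast, h1]; rfl
    obtain ⟨p, hp, hpm⟩ := Nat.exists_prime_and_dvd hM1
    have hpmem : p ∈ m.toNat.primeFactors := Nat.mem_primeFactors.mpr ⟨hp, hpm, hM⟩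
    have hprad : p ∣ rad m.toNat := Finset.dvd_prod_of_mem _ hpmem
    have hpg : p ∣ g := hprad.trans hrad
    have hpgmem : p ∈ g.primeFactors := Nat.mem_primeFactors.mpr ⟨hp, hpg, hg.ne'⟩
    have hpa' : p ∣ a' := (Finset.dvd_prod_of_mem _ hpgmem).trans h
    have hpb' : (p : ℤ) ∣ b' := by
      have h1 : (p : ℤ) ∣ m := by
        rw [← hMcast]; exact_mod_cast hpm
      have h2 : (p : ℤ) ∣ (a' : ℤ) * n := Dvd.dvd.mul_right (by exact_mod_cast hpa') _
      have := dvd_sub h1 h2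
      simpa [hmdef] using this
    have : (p : ℤ) ∣ (1 : ℤ) := by
      have hd : (p : ℤ) ∣ (Int.gcd ((a' : ℤ)) b' : ℤ) :=
        Int.dvd_coe_gcd (by exact_mod_cast hpa') hpb'
      rwa [hcop] at hd
    have := Int.eq_one_of_dvd_one (by positivity) this
    exact hp.one_lt.ne' (by exact_mod_cast this)
  refine ⟨?_, ?_, key⟩
  · intro n1 h1 n2 h2
    have e1 := key n1 h1
    have e2 := key n2 h2
    have : (a' : ℤ) * n1 = (a' : ℤ) * n2 := by omega
    have := mul_left_cancel₀ (by exact_mod_cast ha'.ne' : (a' : ℤ) ≠ 0) this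
    exact_mod_cast this
  · constructor
    · rintro ⟨n, hn⟩
      have e := key n hn
      obtain ⟨hn0, _, _⟩ := hn
      constructor
      · nlinarith [hn0, ha', (by exact_mod_cast hn0 : (1:ℤ) ≤ (n:ℤ)),
          (by exact_mod_cast ha' : (1:ℤ) ≤ (a':ℤ))]
      · exact ⟨n, by omega⟩
    · rintro ⟨hble, k, hk⟩
      have hk0 : 0 < k := by
        by_contra hk0
        push_neg at hk0
        nlinarith [(by exact_mod_cast ha' : (0:ℤ) < (a':ℤ))]
      have hkk : ((k.toNat : ℤ)) = k := Int.toNat_of_nonneg hk0.le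
      have hval : (a' : ℤ) * (k.toNat : ℕ) + b' = 1 := by
        rw [hkk, ← hk]; ring
      refine ⟨k.toNat, ?_, ?_, ?_⟩
      · omega
      · show (0:ℤ) < (a' : ℤ) * (k.toNat : ℕ) + b'
        rw [hval]; norm_num
      · show rad (((a' : ℤ) * (k.toNat : ℕ) + b').toNat) ∣ g
        rw [hval]
        simp [rad]
end

section
/- Let a ∈ ℕ, b ∈ ℤ, g := gcd(a,b), a' := a/g, b' := b/g, and let q₁,…,q_s be the distinct primes dividing g but not a'. Then the following are equivalent: (1) there are infinitely many positive integers n > -b/a with rad(a'n+b') | g; (2) there exists a positive integer n > -b/a with rad(a'n+b') | g and a'n+b' ≥ 2; (3) there exist α₁,…,α_s ∈ ℕ₀ with α₁+⋯+α_s > 0 and q₁^{α₁}⋯q_s^{α_s} ≡ b' (mod a'); (4) rad(g) ∤ a' and there exist α₁,…,α_s ∈ ℕ₀ with q₁^{α₁}⋯q_s^{α_s} ≡ b' (mod a'). -/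
private lemma prod_pow_add_ite {M : Type*} [CommMonoid M] (s : Finset ℕ) (f : ℕ → M)
    (α : ℕ → ℕ) (k q₀ : ℕ) (h : q₀ ∈ s) :
    ∏ q ∈ s, f q ^ (α q + if q = q₀ then k else 0) =
      (∏ q ∈ s, f q ^ α q) * f q₀ ^ k := by
  simp only [pow_add]
  rw [Finset.prod_mul_distrib]
  congr 1
  have : ∀ q ∈ s, f q ^ (if q = q₀ then k else 0) = if q = q₀ then f q ^ k else 1 := by
    intro q _; split <;> simp
  rw [Finset.prod_congr rfl this, Finset.prod_ite_eq' s q₀ (fun q => f q ^ k), if_pos h]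

private lemma euler_int {x n : ℕ} (h : x.Coprime n) :
    ((x : ℤ)) ^ n.totient ≡ 1 [ZMOD (n : ℤ)] := by
  have := Nat.ModEq.pow_totient h
  have h2 : ((x ^ n.totient : ℕ) : ℤ) ≡ ((1 : ℕ) : ℤ) [ZMOD ((n : ℕ) : ℤ)] :=
    Int.natCast_modEq_iff.mpr this
  simpa using h2

theorem rho_infinite_tfae (a : ℕ) (ha : 0 < a) (b : ℤ) :
    ((Rset a b).Infinite ↔
      (∃ n : ℕ, n ∈ Rset a b ∧
        2 ≤ (↑(a / Int.gcd a b) : ℤ) * n + b / (Int.gcd a b : ℤ))) ∧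
    ((∃ n : ℕ, n ∈ Rset a b ∧
        2 ≤ (↑(a / Int.gcd a b) : ℤ) * n + b / (Int.gcd a b : ℤ)) ↔
      (∃ α : ℕ → ℕ,
        0 < ∑ q ∈ (Int.gcd a b).primeFactors.filter (fun p => ¬ p ∣ a / Int.gcd a b), α q ∧
        (∏ q ∈ (Int.gcd a b).primeFactors.filter (fun p => ¬ p ∣ a / Int.gcd a b),
            (q : ℤ) ^ α q) ≡ b / (Int.gcd a b : ℤ) [ZMOD (↑(a / Int.gcd a b) : ℤ)])) ∧
    ((∃ α : ℕ → ℕ,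
        0 < ∑ q ∈ (Int.gcd a b).primeFactors.filter (fun p => ¬ p ∣ a / Int.gcd a b), α q ∧
        (∏ q ∈ (Int.gcd a b).primeFactors.filter (fun p => ¬ p ∣ a / Int.gcd a b),
            (q : ℤ) ^ α q) ≡ b / (Int.gcd a b : ℤ) [ZMOD (↑(a / Int.gcd a b) : ℤ)]) ↔
      (¬ rad (Int.gcd a b) ∣ a / Int.gcd a b ∧
        ∃ α : ℕ → ℕ,
        (∏ q ∈ (Int.gcd a b).primeFactors.filter (fun p => ¬ p ∣ a / Int.gcd a b),
            (q : ℤ) ^ α q) ≡ b / (Int.gcd a b : ℤ) [ZMOD (↑(a / Int.gcd a b) : ℤ)])) := by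
  set g : ℕ := Int.gcd (a : ℤ) b with hgdef
  set A : ℕ := a / g with hAdef
  set B : ℤ := b / (g : ℤ) with hBdef
  set Q : Finset ℕ := g.primeFactors.filter (fun p => ¬ p ∣ A) with hQdef
  have hg0 : 0 < g := Int.gcd_pos_iff.mpr (Or.inl (by exact_mod_cast ha.ne'))
  have hga : g ∣ a := by
    have := Int.gcd_dvd_left (a := (a : ℤ)) (b := b)
    exact_mod_cast this
  have hgb : (g : ℤ) ∣ b := Int.gcd_dvd_right (a : ℤ) b
  have haA : g * A = a := Nat.mul_div_cancel' hga
  have hbB : (g : ℤ) * B = b := Int.mul_ediv_cancel' hgb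
  have hA0 : 0 < A := Nat.div_pos (Nat.le_of_dvd ha hga) hg0
  have hcop : Int.gcd (A : ℤ) B = 1 := by
    have hca : (A : ℤ) = (a : ℤ) / (g : ℤ) := by
      rw [hAdef]; exact (Int.natCast_div a g)
    rw [hca, hBdef, hgdef]
    exact Int.gcd_div_gcd_div_gcd (by exact_mod_cast hg0)
  -- primes dividing A·n + B don't divide A
  have hp_notA : ∀ (p : ℕ) (n : ℤ), p.Prime → (p : ℤ) ∣ (A : ℤ) * n + B → ¬ p ∣ A := by
    intro p n hp hdvd hpA
    have h1 : (p : ℤ) ∣ (A : ℤ) := by exact_mod_cast hpA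
    have h2 : (p : ℤ) ∣ B := by
      have := dvd_sub hdvd (h1.mul_right n)
      simpa using this
    have h3 : (p : ℤ) ∣ (Int.gcd (A : ℤ) B : ℤ) := Int.dvd_coe_gcd h1 h2
    rw [hcop] at h3
    have h4 : p ∣ 1 := by exact_mod_cast h3
    exact hp.one_lt.ne' (Nat.eq_one_of_dvd_one h4)
  -- basic facts about Q
  have hQg : ∀ q ∈ Q, q.Prime ∧ q ∣ g ∧ ¬ q ∣ A := by
    intro q hq
    rw [hQdef, Finset.mem_filter, Nat.mem_primeFactors] at hq
    exact ⟨hq.1.1, hq.1.2.1, hq.2⟩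
  -- radical of a number all of whose primes lie in Q divides g
  have hradQ : ∀ m : ℕ, 0 < m → (∀ p : ℕ, p.Prime → p ∣ m → p ∈ Q) → rad m ∣ g := by
    intro m hm hsub
    have h1 : m.primeFactors ⊆ g.primeFactors := by
      intro p hp
      rw [Nat.mem_primeFactors] at hp ⊢
      exact ⟨hp.1, (hQg p (hsub p hp.1 hp.2.1)).2.1, hg0.ne'⟩
    have h2 : rad m ∣ rad g := by
      unfold rad
      exact Finset.prod_dvd_prod_of_subset _ _ (fun p => p) h1
    exact h2.trans (Nat.prod_primeFactors_dvd g)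
  have hMprime : ∀ (α : ℕ → ℕ) (p : ℕ), p.Prime → p ∣ ∏ q ∈ Q, q ^ α q → p ∈ Q := by
    intro α p hp hdvd
    obtain ⟨q, hq, hpq⟩ := hp.prime.exists_mem_finset_dvd hdvd
    have h1 := hp.dvd_of_dvd_pow hpq
    exact ((Nat.prime_dvd_prime_iff_eq hp (hQg q hq).1).mp h1) ▸ hq
  have hMpos : ∀ α : ℕ → ℕ, 0 < ∏ q ∈ Q, q ^ α q :=
    fun α => Finset.prod_pos (fun q hq => pow_pos (hQg q hq).1.pos _)
  have hradM : ∀ α : ℕ → ℕ, rad (∏ q ∈ Q, q ^ α q) ∣ g :=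
    fun α => hradQ _ (hMpos α) (hMprime α)
  -- representing a number with prime factors in Q as a product over Q
  have hrep : ∀ m : ℕ, 0 < m → (∀ p : ℕ, p.Prime → p ∣ m → p ∈ Q) →
      m = ∏ q ∈ Q, q ^ (m.factorization q) := by
    intro m hm hsub
    have hsupp : m.primeFactors ⊆ Q := by
      intro p hp
      rw [Nat.mem_primeFactors] at hp
      exact hsub p hp.1 hp.2.1
    have h1 : ∏ p ∈ m.primeFactors, p ^ m.factorization p = m := by
      rw [← Nat.support_factorization]
      exact Nat.factorization_prod_pow_eq_self hm.ne'
    conv_lhs => rw [← h1]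
    refine Finset.prod_subset hsupp (fun x _ hx => ?_)
    have : m.factorization x = 0 := by
      have hx' : x ∉ m.factorization.support := by
        rw [Nat.support_factorization]; exact hx
      exact Finsupp.notMem_support_iff.mp hx'
    simp [this]
  -- from a member of Rset, extract the value m = A*n + B as a natural number
  have hmem_m : ∀ n : ℕ, n ∈ Rset a b → ∃ m : ℕ,
      ((m:ℤ) = (A:ℤ)*n + B) ∧ 0 < m ∧ (∀ p : ℕ, p.Prime → p ∣ m → p ∈ Q) := by
    intro n hn
    obtain ⟨hn0, hpos, hrad⟩ := hn
    simp only [← hgdef, ← hAdef, ← hBdef] at hpos hrad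
    have hmeq : ((((A:ℤ)*n + B).toNat : ℤ)) = (A:ℤ)*n + B := Int.toNat_of_nonneg hpos.le
    have hm0 : 0 < ((A:ℤ)*n + B).toNat := by exact_mod_cast hmeq ▸ hpos
    refine ⟨((A:ℤ)*n + B).toNat, hmeq, hm0, ?_⟩
    · intro p hp hpd
      have hpg : p ∣ g := by
        have hpf : p ∈ (((A:ℤ)*n + B).toNat).primeFactors :=
          Nat.mem_primeFactors.mpr ⟨hp, hpd, hm0.ne'⟩
        exact (Finset.dvd_prod_of_mem _ hpf).trans hrad
      have hpA : ¬ p ∣ A := by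
        apply hp_notA p n hp
        rw [← hmeq]
        exact_mod_cast hpd
      exact Finset.mem_filter.mpr ⟨Nat.mem_primeFactors.mpr ⟨hp, hpg, hg0.ne'⟩, hpA⟩
  -- build an element of Rset from a suitable natural number M
  have hbuild : ∀ M : ℕ, 2 ≤ M → ((M:ℤ) ≡ B [ZMOD (A:ℤ)]) → rad M ∣ g →
      (A:ℤ) + B ≤ (M:ℤ) → ∃ n : ℕ, n ∈ Rset a b ∧ (A:ℤ)*n + B = (M:ℤ) := by
    intro M hM2 hMcong hMrad hMge
    have hdvd : (A:ℤ) ∣ (M:ℤ) - B := by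
      have h1 := Int.ModEq.dvd hMcong
      exact dvd_sub_comm.mp h1
    obtain ⟨N, hN⟩ := hdvd
    have hA0' : (0:ℤ) < (A:ℤ) := by exact_mod_cast hA0
    have hN1 : 1 ≤ N := by nlinarith [hN, hMge, hA0']
    have hNto : ((N.toNat : ℤ)) = N := Int.toNat_of_nonneg (by linarith)
    have heq : (A:ℤ) * N.toNat + B = (M:ℤ) := by rw [hNto]; linarith [hN]
    refine ⟨N.toNat, ?_, heq⟩
    have hmem : 0 < N.toNat ∧ 0 < (A:ℤ) * N.toNat + B ∧
        rad (((A:ℤ) * N.toNat + B).toNat) ∣ g := by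
      refine ⟨?_, ?_, ?_⟩
      · exact_mod_cast hNto ▸ hN1
      · rw [heq]; positivity
      · rw [heq]; simpa using hMrad
    simpa only [Rset, Set.mem_setOf_eq, ← hgdef, ← hAdef, ← hBdef] using hmem
  -- (1) → (2)
  have h12 : (Rset a b).Infinite → ∃ n : ℕ, n ∈ Rset a b ∧ 2 ≤ (A:ℤ)*n + B := by
    intro hinf
    obtain ⟨n, hn, hgt⟩ := hinf.exists_gt ((2 - B).toNat)
    refine ⟨n, hn, ?_⟩
    have h1 : (2 - B : ℤ) ≤ ((2-B).toNat : ℤ) := Int.self_le_toNat _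
    have h2 : ((2-B).toNat : ℤ) < (n:ℤ) := by exact_mod_cast hgt
    have h3 : (n:ℤ) ≤ (A:ℤ) * n := le_mul_of_one_le_left (by positivity)
      (by exact_mod_cast hA0)
    linarith
  -- (2) → (1)
  have h21 : (∃ n : ℕ, n ∈ Rset a b ∧ 2 ≤ (A:ℤ)*n + B) → (Rset a b).Infinite := by
    rintro ⟨n, hn, h2⟩
    obtain ⟨m, hmeq, hm0, hmQ⟩ := hmem_m n hn
    have hn1 : 1 ≤ n := hn.1
    have hm2 : 2 ≤ m := by exact_mod_cast hmeq ▸ h2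
    set t := A.totient with htdef
    have ht0 : 0 < t := Nat.totient_pos.mpr hA0
    have hmcop : Nat.Coprime m A := by
      by_contra h
      obtain ⟨p, hp, hpm, hpA⟩ := (Nat.Prime.not_coprime_iff_dvd).mp h
      exact (hQg p (hmQ p hp hpm)).2.2 hpA
    have hmcB : (m:ℤ) ≡ B [ZMOD (A:ℤ)] := by
      rw [hmeq]
      exact (Int.modEq_iff_dvd).mpr ⟨-n, by ring⟩
    have hA0' : (0:ℤ) < (A:ℤ) := by exact_mod_cast hA0
    have hstep : ∀ k : ℕ, ∃ nk : ℕ, nk ∈ Rset a b ∧ (A:ℤ) * nk + B = ((m ^ (1+k*t) : ℕ) : ℤ) := by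
      intro k
      apply hbuild
      · calc 2 ≤ m := hm2
          _ ≤ m ^ (1+k*t) := Nat.le_self_pow (by omega) m
      · have heul : ((m:ℤ))^t ≡ 1 [ZMOD (A:ℤ)] := euler_int hmcop
        have h1 : ((m:ℤ))^(1+k*t) ≡ (m:ℤ) * 1 [ZMOD (A:ℤ)] := by
          rw [pow_add, pow_one, mul_comm k t, pow_mul]
          exact (Int.ModEq.refl _).mul (by simpa using heul.pow k)
        have h2 : ((m ^ (1+k*t) : ℕ) : ℤ) = ((m:ℤ))^(1+k*t) := by push_cast; ring
        rw [h2]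
        exact (h1.trans (by rw [mul_one])).trans hmcB
      · have h3 : rad (m ^ (1+k*t)) = rad m := by
          unfold rad
          rw [Nat.primeFactors_pow m (by omega)]
        rw [h3]
        exact hradQ m hm0 hmQ
      · have h4 : (m:ℤ) ≤ ((m ^ (1+k*t) : ℕ) : ℤ) := by
          exact_mod_cast Nat.le_self_pow (by omega : 1+k*t ≠ 0) m
        have h5 : (A:ℤ) + B ≤ (m:ℤ) := by
          rw [hmeq]
          have : (A:ℤ) * 1 ≤ (A:ℤ) * n := by
            apply mul_le_mul_of_nonneg_left _ hA0'.le
            exact_mod_cast hn1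
          linarith
        linarith
    choose f hfmem hfeq using hstep
    apply Set.infinite_of_injective_forall_mem (f := f) ?_ hfmem
    have hsm : StrictMono f := by
      intro k k' hkk
      have hpow : m ^ (1+k*t) < m ^ (1+k'*t) := by
        apply Nat.pow_lt_pow_right (by omega : 1 < m)
        have : k * t < k' * t := by
          apply Nat.mul_lt_mul_of_lt_of_le hkk (le_refl t) ht0
        omega
      have h1 : (A:ℤ) * f k + B < (A:ℤ) * f k' + B := by
        rw [hfeq k, hfeq k']
        exact_mod_cast hpow
      have h2 : (A:ℤ) * f k < (A:ℤ) * f k' := by linarith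
      have h3 : (f k : ℤ) < (f k' : ℤ) := lt_of_mul_lt_mul_left h2 hA0'.le
      exact_mod_cast h3
    exact hsm.injective
  -- (2) → (3)
  have h23 : (∃ n : ℕ, n ∈ Rset a b ∧ 2 ≤ (A:ℤ)*n + B) →
      ∃ α : ℕ → ℕ, 0 < ∑ q ∈ Q, α q ∧
        (∏ q ∈ Q, (q:ℤ) ^ α q) ≡ B [ZMOD (A:ℤ)] := by
    rintro ⟨n, hn, h2⟩
    obtain ⟨m, hmeq, hm0, hmQ⟩ := hmem_m n hn
    have hm2 : 2 ≤ m := by exact_mod_cast hmeq ▸ h2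
    refine ⟨fun q => m.factorization q, ?_, ?_⟩
    · obtain ⟨p, hp, hpd⟩ := Nat.exists_prime_and_dvd (by omega : m ≠ 1)
      have hpQ := hmQ p hp hpd
      have hpp : 0 < m.factorization p := hp.factorization_pos_of_dvd hm0.ne' hpd
      exact lt_of_lt_of_le hpp (Finset.single_le_sum (fun q _ => Nat.zero_le _) hpQ)
    · have hrepm := hrep m hm0 hmQ
      have hc : ((∏ q ∈ Q, q ^ m.factorization q : ℕ) : ℤ)
          = ∏ q ∈ Q, (q:ℤ) ^ m.factorization q := by push_cast; ring
      rw [← hc, ← hrepm, hmeq]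
      exact (Int.modEq_iff_dvd).mpr ⟨-n, by ring⟩
  -- (3) → (2)
  have h32 : (∃ α : ℕ → ℕ, 0 < ∑ q ∈ Q, α q ∧
        (∏ q ∈ Q, (q:ℤ) ^ α q) ≡ B [ZMOD (A:ℤ)]) →
      ∃ n : ℕ, n ∈ Rset a b ∧ 2 ≤ (A:ℤ)*n + B := by
    rintro ⟨α, hsum, hcong⟩
    obtain ⟨q₀, hq₀Q, hq₀pos⟩ : ∃ q ∈ Q, 0 < α q := by
      by_contra h
      push_neg at h
      simp only [Nat.le_zero] at h
      rw [Finset.sum_eq_zero h] at hsum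
      exact lt_irrefl 0 hsum
    obtain ⟨hq₀p, hq₀g, hq₀A⟩ := hQg q₀ hq₀Q
    set t := A.totient with htdef
    have ht0 : 0 < t := Nat.totient_pos.mpr hA0
    set k : ℕ := ((A:ℤ) + B).toNat with hkdef
    set β : ℕ → ℕ := fun q => α q + if q = q₀ then k*t else 0 with hβdef
    have hMsplit : ∏ q ∈ Q, q ^ β q = (∏ q ∈ Q, q ^ α q) * q₀ ^ (k*t) :=
      prod_pow_add_ite Q (fun q => q) α (k*t) q₀ hq₀Q
    have hM₀2 : 2 ≤ ∏ q ∈ Q, q ^ α q := by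
      calc 2 ≤ q₀ ^ α q₀ := le_trans hq₀p.two_le (Nat.le_self_pow hq₀pos.ne' q₀)
        _ ≤ ∏ q ∈ Q, q ^ α q :=
            Finset.single_le_prod' (fun q hq => Nat.one_le_iff_ne_zero.mpr
              (pow_ne_zero _ (hQg q hq).1.pos.ne')) hq₀Q
    have hM2 : 2 ≤ ∏ q ∈ Q, q ^ β q := by
      rw [hMsplit]
      calc 2 ≤ (∏ q ∈ Q, q ^ α q) * 1 := by omega
        _ ≤ (∏ q ∈ Q, q ^ α q) * q₀ ^ (k*t) := by
            apply Nat.mul_le_mul_left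
            exact Nat.one_le_iff_ne_zero.mpr (pow_ne_zero _ hq₀p.pos.ne')
    have hq₀cop : Nat.Coprime q₀ A := hq₀p.coprime_iff_not_dvd.mpr hq₀A
    have hMcong : ((∏ q ∈ Q, q ^ β q : ℕ) : ℤ) ≡ B [ZMOD (A:ℤ)] := by
      have heul : ((q₀:ℤ)) ^ t ≡ 1 [ZMOD (A:ℤ)] := euler_int hq₀cop
      have heulk : ((q₀:ℤ)) ^ (k*t) ≡ 1 [ZMOD (A:ℤ)] := by
        rw [mul_comm, pow_mul]
        simpa using heul.pow k
      have hcast : ((∏ q ∈ Q, q ^ β q : ℕ) : ℤ)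
          = (∏ q ∈ Q, (q:ℤ) ^ α q) * (q₀:ℤ) ^ (k*t) := by
        rw [hMsplit]; push_cast; ring
      rw [hcast]
      have := hcong.mul heulk
      simpa using this
    have hMbig : (A:ℤ) + B ≤ ((∏ q ∈ Q, q ^ β q : ℕ) : ℤ) := by
      have h1 : k < 2 ^ k := Nat.lt_two_pow_self
      have h2 : 2 ^ k ≤ q₀ ^ k := Nat.pow_le_pow_left hq₀p.two_le k
      have h3 : q₀ ^ k ≤ q₀ ^ (k*t) :=
        Nat.pow_le_pow_right hq₀p.pos (Nat.le_mul_of_pos_right k ht0)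
      have h4 : q₀ ^ (k*t) ≤ ∏ q ∈ Q, q ^ β q := by
        rw [hMsplit]
        exact Nat.le_mul_of_pos_left _ (by positivity)
      have h5 : k + 1 ≤ ∏ q ∈ Q, q ^ β q := by omega
      have h6 : ((A:ℤ) + B) ≤ (k:ℤ) := Int.self_le_toNat _
      have h7 : (k:ℤ) + 1 ≤ ((∏ q ∈ Q, q ^ β q : ℕ) : ℤ) := by exact_mod_cast h5
      linarith
    obtain ⟨n, hmem, heq⟩ := hbuild _ hM2 hMcong (hradM β) hMbig
    refine ⟨n, hmem, ?_⟩
    rw [heq]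
    exact_mod_cast hM2
  -- (3) → (4)
  have h34 : (∃ α : ℕ → ℕ, 0 < ∑ q ∈ Q, α q ∧
        (∏ q ∈ Q, (q:ℤ) ^ α q) ≡ B [ZMOD (A:ℤ)]) →
      (¬ rad g ∣ A ∧ ∃ α : ℕ → ℕ,
        (∏ q ∈ Q, (q:ℤ) ^ α q) ≡ B [ZMOD (A:ℤ)]) := by
    rintro ⟨α, hsum, hcong⟩
    refine ⟨?_, α, hcong⟩
    intro hdvd
    have hQempty : Q = ∅ := by
      rw [Finset.eq_empty_iff_forall_notMem]
      intro q hq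
      obtain ⟨hqp, hqg, hqA⟩ := hQg q hq
      apply hqA
      have h1 : q ∣ rad g := by
        have h2 : q ∈ g.primeFactors := Nat.mem_primeFactors.mpr ⟨hqp, hqg, hg0.ne'⟩
        exact Finset.dvd_prod_of_mem _ h2
      exact h1.trans hdvd
    rw [hQempty] at hsum
    simp at hsum
  -- (4) → (3)
  have h43 : (¬ rad g ∣ A ∧ ∃ α : ℕ → ℕ,
        (∏ q ∈ Q, (q:ℤ) ^ α q) ≡ B [ZMOD (A:ℤ)]) →
      (∃ α : ℕ → ℕ, 0 < ∑ q ∈ Q, α q ∧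
        (∏ q ∈ Q, (q:ℤ) ^ α q) ≡ B [ZMOD (A:ℤ)]) := by
    rintro ⟨hnd, α, hcong⟩
    obtain ⟨q₀, hq₀Q⟩ : Q.Nonempty := by
      rw [Finset.nonempty_iff_ne_empty]
      intro hQe
      apply hnd
      unfold rad
      apply Finset.prod_primes_dvd
      · intro p hp
        exact (Nat.prime_of_mem_primeFactors hp).prime
      · intro p hp
        by_contra hnd2
        have hin : p ∈ Q := Finset.mem_filter.mpr ⟨hp, hnd2⟩
        rw [hQe] at hin
        exact absurd hin (Finset.notMem_empty p)
    obtain ⟨hq₀p, hq₀g, hq₀A⟩ := hQg q₀ hq₀Q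
    have ht0 : 0 < A.totient := Nat.totient_pos.mpr hA0
    refine ⟨fun q => α q + if q = q₀ then A.totient else 0, ?_, ?_⟩
    · calc 0 < A.totient := ht0
        _ ≤ α q₀ + (if q₀ = q₀ then A.totient else 0) := by simp
        _ ≤ ∑ q ∈ Q, (α q + if q = q₀ then A.totient else 0) :=
            Finset.single_le_sum (f := fun q => α q + if q = q₀ then A.totient else 0)
              (fun q _ => Nat.zero_le _) hq₀Q
    · rw [prod_pow_add_ite Q (fun q => (q:ℤ)) α A.totient q₀ hq₀Q]
      have hq₀cop : Nat.Coprime q₀ A := hq₀p.coprime_iff_not_dvd.mpr hq₀A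
      have := hcong.mul (euler_int hq₀cop)
      simpa using this
  exact ⟨⟨h12, h21⟩, ⟨h23, h32⟩, h34, h43⟩
end

section
/- For all a ∈ ℕ, b ∈ ℤ, the quantity ρ(a,b) := #{n ∈ ℕ, n > -b/a : rad(a'n+b') | g} (where g = gcd(a,b), a' = a/g, b' = b/g) lies in {0, 1, ∞}; i.e., if ρ(a,b) ≥ 2 then ρ(a,b) = ∞. -/
lemma rad_pow (m k : ℕ) (hk : k ≠ 0) : rad (m ^ k) = rad m := by
  unfold rad
  rw [Nat.primeFactors_pow m hk]

lemma key_lemma (a : ℕ) (ha : 0 < a) (b : ℤ) (n₀ : ℕ) (h₀ : n₀ ∈ Rset a b)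
    (hm2 : 2 ≤ ((↑(a / Int.gcd a b) : ℤ) * n₀ + b / (Int.gcd a b : ℤ)).toNat) :
    (Rset a b).Infinite := by
  set g : ℕ := Int.gcd (a : ℤ) b with hg
  set a' : ℕ := a / g with ha'
  set B : ℤ := b / (g : ℤ) with hB
  obtain ⟨hn₀, hpos, hrad⟩ := h₀
  set m : ℕ := ((a' : ℤ) * n₀ + B).toNat with hmdef
  have hmZ : (m : ℤ) = (a' : ℤ) * n₀ + B := Int.toNat_of_nonneg hpos.le
  have hgpos : 0 < g := Int.gcd_pos_iff.mpr (Or.inl (by exact_mod_cast ha.ne'))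
  have hgdvd : g ∣ a := by
    have := Int.gcd_dvd_left (a := (a : ℤ)) (b := b)
    exact_mod_cast this
  have ha'pos : 0 < a' := Nat.div_pos (Nat.le_of_dvd ha hgdvd) hgpos
  -- coprimality of a' and b', hence of a' and m
  have hcop1 : Int.gcd ((a' : ℤ)) B = 1 := by
    have h := Int.gcd_div_gcd_div_gcd (i := (a : ℤ)) (j := b)
      (by exact_mod_cast hgpos)
    have : (a' : ℤ) = (a : ℤ) / (g : ℤ) := by
      rw [ha']; exact Int.natCast_div a g
    rw [this, hB]
    exact h
  have hcop : Nat.Coprime a' m := by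
    have h1 : Int.gcd ((a' : ℤ)) (B + (a' : ℤ) * n₀) = 1 := by
      have hic : IsCoprime ((a' : ℤ)) B := Int.isCoprime_iff_gcd_eq_one.mpr hcop1
      exact Int.isCoprime_iff_gcd_eq_one.mp (hic.add_mul_left_right _)
    have h2 : (m : ℤ) = B + (a' : ℤ) * n₀ := by rw [hmZ]; ring
    unfold Nat.Coprime
    have := h1
    rw [← h2] at this
    simpa [Int.gcd_natCast_natCast] using this
  have hm0 : 0 < m := by omega
  have hφ : 0 < a'.totient := Nat.totient_pos.mpr ha'pos
  -- exponents
  set K : ℕ → ℕ := fun t => (t + 1) * a'.totient with hK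
  have hKpos : ∀ t, 0 < K t := fun t => by positivity
  have hmod : ∀ t, a' ∣ m ^ K t - 1 := by
    intro t
    have h1 : m ^ a'.totient ≡ 1 [MOD a'] := Nat.ModEq.pow_totient hcop.symm
    have h2 : (m ^ a'.totient) ^ (t + 1) ≡ 1 ^ (t + 1) [MOD a'] := h1.pow _
    rw [← pow_mul, one_pow, mul_comm a'.totient (t+1)] at h2
    have h3 : 1 ≤ m ^ K t := Nat.one_le_pow _ _ hm0
    exact (Nat.modEq_iff_dvd' h3).mp h2.symm
  set D : ℕ → ℕ := fun t => m * (m ^ K t - 1) with hD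
  have hDdvd : ∀ t, a' ∣ D t := fun t => Dvd.dvd.mul_left (hmod t) m
  have hDval : ∀ t, m ^ (K t + 1) = m + D t := by
    intro t
    have hle : m ≤ m * m ^ K t := Nat.le_mul_of_pos_right m (Nat.pow_pos hm0)
    have : m ^ (K t + 1) = m * m ^ K t := by rw [pow_succ, mul_comm]
    rw [this, hD]
    simp only [Nat.mul_sub, mul_one]
    omega
  set N : ℕ → ℕ := fun t => n₀ + D t / a' with hN
  have hId : ∀ t, (a' : ℤ) * (N t) + B = ((m ^ (K t + 1) : ℕ) : ℤ) := by
    intro t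
    have h1 : a' * (D t / a') = D t := Nat.mul_div_cancel' (hDdvd t)
    have h1' : (a' : ℤ) * ((D t / a' : ℕ) : ℤ) = (D t : ℤ) := by exact_mod_cast congrArg (Nat.cast : ℕ → ℤ) h1
    have h2 := hDval t
    have : ((m ^ (K t + 1) : ℕ) : ℤ) = (m : ℤ) + (D t : ℤ) := by exact_mod_cast congrArg (Nat.cast : ℕ → ℤ) h2
    rw [this]
    simp only [hN, Nat.cast_add]
    rw [mul_add]
    linarith [h1', hmZ]
  have hmem : ∀ t, N t ∈ Rset a b := by
    intro t
    refine ⟨by simp [hN]; omega, ?_, ?_⟩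
    · rw [show ((a / Int.gcd (a:ℤ) b : ℕ) : ℤ) = (a' : ℤ) from rfl, hId t]
      exact_mod_cast Nat.pow_pos hm0
    · rw [show ((a / Int.gcd (a:ℤ) b : ℕ) : ℤ) = (a' : ℤ) from rfl, hId t,
        Int.toNat_natCast, rad_pow _ _ (Nat.succ_ne_zero _)]
      exact hrad
  have hinj : Function.Injective N := by
    intro t₁ t₂ h
    have h1 : ((m ^ (K t₁ + 1) : ℕ) : ℤ) = ((m ^ (K t₂ + 1) : ℕ) : ℤ) := by
      rw [← hId t₁, ← hId t₂, h]
    have h2 : m ^ (K t₁ + 1) = m ^ (K t₂ + 1) := by exact_mod_cast h1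
    have h3 : K t₁ + 1 = K t₂ + 1 := Nat.pow_right_injective hm2 h2
    have h4 : (t₁ + 1) * a'.totient = (t₂ + 1) * a'.totient := by
      simpa [hK] using h3
    have := Nat.eq_of_mul_eq_mul_right hφ h4
    omega
  exact Set.infinite_of_injective_forall_mem hinj hmem

theorem rho_zero_one_or_infinite (a : ℕ) (ha : 0 < a) (b : ℤ) (n₁ n₂ : ℕ)
    (h₁ : n₁ ∈ Rset a b) (h₂ : n₂ ∈ Rset a b) (hne : n₁ ≠ n₂) :
    (Rset a b).Infinite := by
  set g : ℕ := Int.gcd (a : ℤ) b with hg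
  set a' : ℕ := a / g with ha'
  set B : ℤ := b / (g : ℤ) with hB
  have hgpos : 0 < g := Int.gcd_pos_iff.mpr (Or.inl (by exact_mod_cast ha.ne'))
  have hgdvd : g ∣ a := by
    have := Int.gcd_dvd_left (a := (a : ℤ)) (b := b)
    exact_mod_cast this
  have ha'pos : 0 < a' := Nat.div_pos (Nat.le_of_dvd ha hgdvd) hgpos
  obtain ⟨hn₁, hp₁, hr₁⟩ := h₁
  obtain ⟨hn₂, hp₂, hr₂⟩ := h₂
  set m₁ : ℕ := ((a' : ℤ) * n₁ + B).toNat with hm₁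
  set m₂ : ℕ := ((a' : ℤ) * n₂ + B).toNat with hm₂
  have hm₁Z : (m₁ : ℤ) = (a' : ℤ) * n₁ + B := Int.toNat_of_nonneg hp₁.le
  have hm₂Z : (m₂ : ℤ) = (a' : ℤ) * n₂ + B := Int.toNat_of_nonneg hp₂.le
  have hm₁pos : 0 < m₁ := by
    have h : (0:ℤ) < (m₁ : ℤ) := by rw [hm₁Z]; exact hp₁
    exact_mod_cast h
  have hm₂pos : 0 < m₂ := by
    have h : (0:ℤ) < (m₂ : ℤ) := by rw [hm₂Z]; exact hp₂
    exact_mod_cast h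
  have hmne : m₁ ≠ m₂ := by
    intro h
    apply hne
    have : (a' : ℤ) * n₁ + B = (a' : ℤ) * n₂ + B := by rw [← hm₁Z, ← hm₂Z, h]
    have h2 : (a' : ℤ) * n₁ = (a' : ℤ) * n₂ := by linarith
    have ha'Z : (0 : ℤ) < (a' : ℤ) := by exact_mod_cast ha'pos
    have := mul_left_cancel₀ ha'Z.ne' h2
    exact_mod_cast this
  rcases Nat.lt_or_ge m₁ 2 with h | h
  · -- m₁ = 1, so m₂ ≥ 2
    have hm₂2 : 2 ≤ m₂ := by omega
    exact key_lemma a ha b n₂ ⟨hn₂, hp₂, hr₂⟩ hm₂2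
  · exact key_lemma a ha b n₁ ⟨hn₁, hp₁, hr₁⟩ h
end
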